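/- arXiv:0803.3750 — 5 statements merged into one kernel-verified Lean document; each statement's English description precedes it below -/
import Mathlib

section
/- For any f : {-1,1}^I → {-1,1} and any i, j ∈ I, P[i ∈ S_f and j ∈ S_f] = P[i and j are both pivotal for f]. Consequently E[|S_f|²] = E[|P_f|²], where P_f denotes the (random) set of pivotal bits. -/
open Finset

variable {I : Type*} [Fintype I] [DecidableEq I]

/-- Expectation with respect to the uniform probability measure on `{-1,1}^I ≅ (I → Bool)`. -/
noncomputable def expec (f : (I → Bool) → ℝ) : ℝ :=
  (∑ ω : I → Bool, f ω) / (Fintype.card (I → Bool) : ℝ)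

/-- The value `±1` of a bit. -/
noncomputable def sgn (b : Bool) : ℝ := if b then 1 else -1

/-- The Walsh function `χ_S(ω) = ∏_{i ∈ S} ω_i`. -/
noncomputable def chi (S : Finset I) (ω : I → Bool) : ℝ := ∏ i ∈ S, sgn (ω i)

/-- The Fourier coefficient `f̂(S) = E[f ⬝ χ_S]`. -/
noncomputable def fhat (f : (I → Bool) → ℝ) (S : Finset I) : ℝ :=
  expec (fun ω => f ω * chi S ω)

lemma sgn_mul_self (b : Bool) : sgn b * sgn b = 1 := by
  cases b <;> norm_num [sgn]

lemma sgn_not (b : Bool) : sgn (!b) = - sgn b := by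
  cases b <;> norm_num [sgn]

lemma cardN_pos : (0 : ℝ) < (Fintype.card (I → Bool) : ℝ) := by
  exact_mod_cast Fintype.card_pos

lemma sum_chi_chi (ω τ : I → Bool) :
    ∑ S : Finset I, chi S ω * chi S τ
      = if ω = τ then (Fintype.card (I → Bool) : ℝ) else 0 := by
  have h1 : ∀ S : Finset I, chi S ω * chi S τ = ∏ i ∈ S, (sgn (ω i) * sgn (τ i)) := by
    intro S; simp [chi, Finset.prod_mul_distrib]
  have h2 : ∑ S : Finset I, chi S ω * chi S τ
      = ∏ i : I, (sgn (ω i) * sgn (τ i) + 1) := by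
    rw [Finset.prod_add]
    simp only [Finset.powerset_univ, Finset.prod_const_one, mul_one]
    exact Finset.sum_congr rfl fun S _ => h1 S
  rw [h2]
  by_cases h : ω = τ
  · subst h
    rw [if_pos rfl]
    have : ∀ i : I, sgn (ω i) * sgn (ω i) + 1 = 2 := by
      intro i; rw [sgn_mul_self]; norm_num
    rw [Finset.prod_congr rfl fun i _ => this i, Finset.prod_const, Fintype.card_fun,
      Fintype.card_bool]
    push_cast
    simp
  · rw [if_neg h]
    obtain ⟨i, hi⟩ := Function.ne_iff.mp h
    refine Finset.prod_eq_zero (Finset.mem_univ i) ?_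
    revert hi
    cases hω : ω i <;> cases hτ : τ i <;> norm_num [sgn]

lemma plancherel (f g : (I → Bool) → ℝ) :
    ∑ S : Finset I, fhat f S * fhat g S = expec (fun ω => f ω * g ω) := by
  have hN := (cardN_pos (I := I))
  set N : ℝ := (Fintype.card (I → Bool) : ℝ) with hNdef
  have key : ∑ S : Finset I, (∑ ω : I → Bool, f ω * chi S ω) * (∑ τ : I → Bool, g τ * chi S τ)
      = N * ∑ ω : I → Bool, f ω * g ω := by
    calc ∑ S : Finset I, (∑ ω : I → Bool, f ω * chi S ω) * (∑ τ : I → Bool, g τ * chi S τ)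
        = ∑ S : Finset I, ∑ ω : I → Bool, ∑ τ : I → Bool,
            (f ω * chi S ω) * (g τ * chi S τ) := by
          exact Finset.sum_congr rfl fun S _ => Finset.sum_mul_sum _ _ _ _
      _ = ∑ ω : I → Bool, ∑ S : Finset I, ∑ τ : I → Bool,
            (f ω * chi S ω) * (g τ * chi S τ) := Finset.sum_comm
      _ = ∑ ω : I → Bool, ∑ τ : I → Bool, ∑ S : Finset I,
            (f ω * chi S ω) * (g τ * chi S τ) :=
          Finset.sum_congr rfl fun ω _ => Finset.sum_comm
      _ = ∑ ω : I → Bool, ∑ τ : I → Bool, (f ω * g τ) * ∑ S : Finset I, chi S ω * chi S τ := by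
          refine Finset.sum_congr rfl fun ω _ => Finset.sum_congr rfl fun τ _ => ?_
          rw [Finset.mul_sum]
          exact Finset.sum_congr rfl fun S _ => by ring
      _ = ∑ ω : I → Bool, (f ω * g ω) * N := by
          refine Finset.sum_congr rfl fun ω _ => ?_
          simp only [sum_chi_chi, mul_ite, mul_zero]
          rw [Finset.sum_ite_eq (Finset.univ) ω (fun τ => f ω * g τ * N)]
          simp
      _ = N * ∑ ω : I → Bool, f ω * g ω := by
          rw [Finset.mul_sum]; exact Finset.sum_congr rfl fun ω _ => by ring
  unfold fhat expec
  simp only [div_mul_div_comm]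
  rw [← Finset.sum_div, key]
  exact mul_div_mul_left _ _ hN.ne'

lemma flip_involutive (i : I) :
    Function.Involutive (fun ω : I → Bool => Function.update ω i (!ω i)) := by
  intro ω; funext k
  by_cases h : k = i
  · subst h; simp
  · simp [Function.update_of_ne h]

lemma chi_update (S : Finset I) (i : I) (ω : I → Bool) :
    chi S (Function.update ω i (!ω i)) = (if i ∈ S then -1 else 1) * chi S ω := by
  by_cases h : i ∈ S
  · rw [if_pos h]
    unfold chi
    rw [← Finset.mul_prod_erase _ _ h,
      ← Finset.mul_prod_erase _ (fun k => sgn (ω k)) h]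
    have he : ∀ k ∈ S.erase i, sgn (Function.update ω i (!ω i) k) = sgn (ω k) := by
      intro k hk
      rw [Function.update_of_ne (Finset.ne_of_mem_erase hk)]
    rw [Finset.prod_congr rfl he, Function.update_self, sgn_not]
    ring
  · rw [if_neg h, one_mul]
    unfold chi
    refine Finset.prod_congr rfl fun k hk => ?_
    rw [Function.update_of_ne (by rintro rfl; exact h hk)]

lemma fhat_flip (f : (I → Bool) → ℝ) (i : I) (S : Finset I) :
    fhat (fun ω => f (Function.update ω i (!ω i))) S
      = (if i ∈ S then -1 else 1) * fhat f S := by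
  have hsum : ∑ ω : I → Bool, f (Function.update ω i (!ω i)) * chi S ω
      = ∑ ω : I → Bool, (if i ∈ S then (-1 : ℝ) else 1) * (f ω * chi S ω) := by
    refine Fintype.sum_bijective _ (flip_involutive i).bijective _ _ fun ω => ?_
    show f (Function.update ω i (!ω i)) * chi S ω
      = (if i ∈ S then (-1 : ℝ) else 1)
        * (f (Function.update ω i (!ω i)) * chi S (Function.update ω i (!ω i)))
    rw [chi_update]
    by_cases h : i ∈ S <;> simp [h] <;> ring
  unfold fhat expec
  rw [hsum, ← Finset.mul_sum, mul_div_assoc]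

lemma expec_comb (a b c d : (I → Bool) → ℝ) :
    expec (fun ω => (a ω - b ω - c ω + d ω) / 4)
      = (expec a - expec b - expec c + expec d) / 4 := by
  unfold expec
  rw [← Finset.sum_div, Finset.sum_add_distrib, Finset.sum_sub_distrib, Finset.sum_sub_distrib]
  ring

lemma sum_comb (a b c d : Finset I → ℝ) :
    ∑ S : Finset I, (a S - b S - c S + d S) / 4
      = (∑ S : Finset I, a S - ∑ S : Finset I, b S - ∑ S : Finset I, c S
          + ∑ S : Finset I, d S) / 4 := by
  rw [← Finset.sum_div, Finset.sum_add_distrib, Finset.sum_sub_distrib, Finset.sum_sub_distrib]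

lemma expec_congr (a b : (I → Bool) → ℝ) (h : ∀ ω, a ω = b ω) : expec a = expec b :=
  congrArg expec (funext h)

lemma expec_sum {α : Type*} [Fintype α] (g : α → (I → Bool) → ℝ) :
    expec (fun ω => ∑ x : α, g x ω) = ∑ x : α, expec (g x) := by
  unfold expec
  rw [← Finset.sum_div, Finset.sum_comm]

open Classical in
lemma pair_eq (f : (I → Bool) → ℝ) (hpm : ∀ ω, f ω = 1 ∨ f ω = -1) (i j : I) :
    (∑ S : Finset I, if i ∈ S ∧ j ∈ S then fhat f S ^ 2 else 0)
      = expec (fun ω => if f (Function.update ω i (!ω i)) ≠ f ω ∧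
          f (Function.update ω j (!ω j)) ≠ f ω then 1 else 0) := by
  set gi : (I → Bool) → ℝ := fun ω => f (Function.update ω i (!ω i)) with hgi
  set gj : (I → Bool) → ℝ := fun ω => f (Function.update ω j (!ω j)) with hgj
  calc (∑ S : Finset I, if i ∈ S ∧ j ∈ S then fhat f S ^ 2 else 0)
      = ∑ S : Finset I, (fhat f S * fhat f S - fhat f S * fhat gi S
          - fhat f S * fhat gj S + fhat gi S * fhat gj S) / 4 := by
        refine Finset.sum_congr rfl fun S _ => ?_
        rw [hgi, hgj, fhat_flip, fhat_flip]
        by_cases hi : i ∈ S <;> by_cases hj : j ∈ S <;> simp [hi, hj] <;> ring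
    _ = (∑ S : Finset I, fhat f S * fhat f S - ∑ S : Finset I, fhat f S * fhat gi S
          - ∑ S : Finset I, fhat f S * fhat gj S + ∑ S : Finset I, fhat gi S * fhat gj S) / 4 :=
        sum_comb _ _ _ _
    _ = (expec (fun ω => f ω * f ω) - expec (fun ω => f ω * gi ω)
          - expec (fun ω => f ω * gj ω) + expec (fun ω => gi ω * gj ω)) / 4 := by
        rw [plancherel, plancherel, plancherel, plancherel]
    _ = expec (fun ω => (f ω * f ω - f ω * gi ω - f ω * gj ω + gi ω * gj ω) / 4) :=
        (expec_comb _ _ _ _).symm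
    _ = expec (fun ω => if f (Function.update ω i (!ω i)) ≠ f ω ∧
          f (Function.update ω j (!ω j)) ≠ f ω then 1 else 0) := by
        refine expec_congr _ _ fun ω => ?_
        rw [hgi, hgj]
        simp only
        rcases hpm ω with h0 | h0 <;>
          rcases hpm (Function.update ω i (!ω i)) with h1 | h1 <;>
          rcases hpm (Function.update ω j (!ω j)) with h2 | h2 <;>
          rw [h0, h1, h2] <;> norm_num

open Classical in
/-- For `f : {-1,1}^I → {-1,1}` and `i, j ∈ I`,
`P[i ∈ 𝒮_f ∧ j ∈ 𝒮_f] = P[i and j are both pivotal]`; consequently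
`E[|𝒮_f|²] = E[|𝒫_f|²]` where `𝒫_f(ω)` is the set of pivotal bits. -/
theorem spectral_pair_eq_pivotal_pair (f : (I → Bool) → ℝ)
    (hpm : ∀ ω, f ω = 1 ∨ f ω = -1) :
    (∀ i j : I,
      (∑ S : Finset I, if i ∈ S ∧ j ∈ S then fhat f S ^ 2 else 0)
        = expec (fun ω => if f (Function.update ω i (!ω i)) ≠ f ω ∧
            f (Function.update ω j (!ω j)) ≠ f ω then 1 else 0)) ∧
    (∑ S : Finset I, fhat f S ^ 2 * (S.card : ℝ) ^ 2)
      = expec (fun ω =>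
          ((univ.filter (fun i : I => f (Function.update ω i (!ω i)) ≠ f ω)).card : ℝ) ^ 2) := by
  refine ⟨pair_eq f hpm, ?_⟩
  have hcard : ∀ S : Finset I, (S.card : ℝ) = ∑ i : I, if i ∈ S then (1 : ℝ) else 0 := by
    intro S
    rw [Finset.sum_boole]
    congr 1
    rw [show univ.filter (fun i => i ∈ S) = S by ext i; simp]
  calc (∑ S : Finset I, fhat f S ^ 2 * (S.card : ℝ) ^ 2)
      = ∑ S : Finset I, ∑ i : I, ∑ j : I, (if i ∈ S ∧ j ∈ S then fhat f S ^ 2 else 0) := by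
        refine Finset.sum_congr rfl fun S _ => ?_
        rw [hcard S, pow_two, pow_two, Finset.sum_mul_sum, Finset.mul_sum]
        refine Finset.sum_congr rfl fun i _ => ?_
        rw [Finset.mul_sum]
        refine Finset.sum_congr rfl fun j _ => ?_
        by_cases hi : i ∈ S <;> by_cases hj : j ∈ S <;> simp [hi, hj]
    _ = ∑ i : I, ∑ j : I, ∑ S : Finset I, (if i ∈ S ∧ j ∈ S then fhat f S ^ 2 else 0) := by
        rw [Finset.sum_comm]
        exact Finset.sum_congr rfl fun i _ => Finset.sum_comm
    _ = ∑ i : I, ∑ j : I, expec (fun ω => if f (Function.update ω i (!ω i)) ≠ f ω ∧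
          f (Function.update ω j (!ω j)) ≠ f ω then 1 else 0) := by
        exact Finset.sum_congr rfl fun i _ => Finset.sum_congr rfl fun j _ => pair_eq f hpm i j
    _ = expec (fun ω => ∑ i : I, ∑ j : I, if f (Function.update ω i (!ω i)) ≠ f ω ∧
          f (Function.update ω j (!ω j)) ≠ f ω then (1 : ℝ) else 0) := by
        rw [expec_sum]
        exact Finset.sum_congr rfl fun i _ => (expec_sum _).symm
    _ = expec (fun ω =>
          ((univ.filter (fun i : I => f (Function.update ω i (!ω i)) ≠ f ω)).card : ℝ) ^ 2) := by
        refine expec_congr _ _ fun ω => ?_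
        rw [show ((univ.filter (fun i : I => f (Function.update ω i (!ω i)) ≠ f ω)).card : ℝ)
            = ∑ i : I, if f (Function.update ω i (!ω i)) ≠ f ω then (1 : ℝ) else 0 by
          rw [Finset.sum_boole]]
        rw [pow_two, Finset.sum_mul_sum]
        refine Finset.sum_congr rfl fun i _ => Finset.sum_congr rfl fun j _ => ?_
        by_cases hi : f (Function.update ω i (!ω i)) ≠ f ω <;>
          by_cases hj : f (Function.update ω j (!ω j)) ≠ f ω <;> simp [hi, hj]
end

section
/- Let f : {-1,1}^I → ℝ, and let W, B be disjoint subsets of I. Let Λ_B be the event that B is pivotal for f (there exists ω' agreeing with ω off B with f(ω') ≠ f(ω)), and λ(B,W) = P[Λ_B | F_{W^c}]. Then ∑_{S : S∩B≠∅, S∩W=∅} f̂(S)² ≤ 4·‖f‖_∞²·E[λ(B,W)²]. -/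
open Finset

variable {I : Type*} [Fintype I] [DecidableEq I]

/-- The conditional expectation `E[g | F_A]` given the coordinates in `A`. -/
noncomputable def condE (g : (I → Bool) → ℝ) (A : Finset I) (ω : I → Bool) : ℝ :=
  expec (fun z => g (fun i => if i ∈ A then ω i else z i))

open Classical in
/-- The indicator of the event `Λ_B` that the set of bits `B` is pivotal for `f`. -/
noncomputable def pivInd (f : (I → Bool) → ℝ) (B : Finset I) (ω : I → Bool) : ℝ :=
  if ∃ ω' : I → Bool, (∀ i ∉ B, ω' i = ω i) ∧ f ω' ≠ f ω then 1 else 0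

/-- The sup norm `‖f‖_∞`. -/
noncomputable def supnorm (f : (I → Bool) → ℝ) : ℝ := ⨆ ω : I → Bool, |f ω|

set_option linter.unusedSectionVars false

lemma cardR_pos : (0:ℝ) < (Fintype.card (I → Bool) : ℝ) := by
  exact_mod_cast Fintype.card_pos

lemma cardR_ne_zero : (Fintype.card (I → Bool) : ℝ) ≠ 0 := ne_of_gt cardR_pos

lemma expec_const (c : ℝ) : expec (fun _ : I → Bool => c) = c := by
  rw [expec, Finset.sum_const, Finset.card_univ, nsmul_eq_mul,
    mul_div_cancel_left₀ _ cardR_ne_zero]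

lemma expec_sub (u v : (I → Bool) → ℝ) :
    expec (fun ω => u ω - v ω) = expec u - expec v := by
  simp [expec, Finset.sum_sub_distrib, sub_div]

lemma expec_mul_left (c : ℝ) (u : (I → Bool) → ℝ) :
    expec (fun ω => c * u ω) = c * expec u := by
  simp [expec, ← Finset.mul_sum, mul_div_assoc]

lemma expec_sum_s11 {κ : Type*} (s : Finset κ) (u : κ → (I → Bool) → ℝ) :
    expec (fun ω => ∑ k ∈ s, u k ω) = ∑ k ∈ s, expec (u k) := by
  simp [expec, ← Finset.sum_div]
  rw [Finset.sum_comm]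

lemma expec_mono {u v : (I → Bool) → ℝ} (h : ∀ ω, u ω ≤ v ω) : expec u ≤ expec v := by
  unfold expec
  apply div_le_div_of_nonneg_right ?_ (le_of_lt cardR_pos)
  exact Finset.sum_le_sum fun ω _ => h ω

lemma abs_expec_le {u : (I → Bool) → ℝ} {v : (I → Bool) → ℝ}
    (h : ∀ ω, |u ω| ≤ v ω) : |expec u| ≤ expec v := by
  unfold expec
  rw [abs_div, abs_of_pos cardR_pos]
  apply div_le_div_of_nonneg_right ?_ (le_of_lt cardR_pos)
  exact (Finset.abs_sum_le_sum_abs _ _).trans (Finset.sum_le_sum fun ω _ => h ω)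

lemma abs_sgn (b : Bool) : |sgn b| = 1 := by cases b <;> simp [sgn]

lemma chi_empty (ω : I → Bool) : chi (∅ : Finset I) ω = 1 := by simp [chi]

lemma chi_mul (S T : Finset I) (ω : I → Bool) :
    chi S ω * chi T ω = chi (symmDiff S T) ω := by
  have hS : chi S ω = chi (S \ T) ω * chi (S ∩ T) ω := by
    rw [chi, chi, chi, ← Finset.prod_union (Finset.disjoint_sdiff_inter S T),
      Finset.sdiff_union_inter]
  have hT : chi T ω = chi (T \ S) ω * chi (T ∩ S) ω := by
    rw [chi, chi, chi, ← Finset.prod_union (Finset.disjoint_sdiff_inter T S),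
      Finset.sdiff_union_inter]
  have hsq : chi (S ∩ T) ω * chi (T ∩ S) ω = 1 := by
    rw [Finset.inter_comm T S, chi, ← Finset.prod_mul_distrib]
    exact Finset.prod_eq_one fun i _ => sgn_mul_self _
  have hsd : chi (S \ T) ω * chi (T \ S) ω = chi (symmDiff S T) ω := by
    rw [chi, chi, chi, ← Finset.prod_union disjoint_sdiff_sdiff]
    rfl
  calc chi S ω * chi T ω
      = (chi (S \ T) ω * chi (T \ S) ω) * (chi (S ∩ T) ω * chi (T ∩ S) ω) := by
        rw [hS, hT]; ring
    _ = chi (symmDiff S T) ω := by rw [hsq, hsd, mul_one]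

lemma expec_chi (S : Finset I) : expec (chi S) = if S = ∅ then 1 else 0 := by
  rcases eq_or_ne S ∅ with rfl | hS
  · simp only [if_pos rfl]
    have : (chi (∅ : Finset I)) = fun _ : I → Bool => (1:ℝ) := funext chi_empty
    rw [this, expec_const]
    simp
  · rw [if_neg hS]
    obtain ⟨i, hi⟩ := Finset.nonempty_iff_ne_empty.mpr hS
    have hinv : Function.Involutive (fun ω : I → Bool => Function.update ω i (!ω i)) := by
      intro ω
      funext j
      rcases eq_or_ne j i with rfl | hj
      · simp [Function.update]
      · simp [Function.update, hj]
    have hflip : ∀ ω : I → Bool, chi S (Function.update ω i (!ω i)) = - chi S ω := by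
      intro ω
      rw [chi, chi, ← Finset.mul_prod_erase S _ hi, ← Finset.mul_prod_erase S _ hi]
      have h1 : Function.update ω i (!ω i) i = !ω i := by simp [Function.update]
      have h2 : ∀ j ∈ S.erase i, sgn (Function.update ω i (!ω i) j) = sgn (ω j) := by
        intro j hj
        have := Finset.ne_of_mem_erase hj
        simp [Function.update, this]
      rw [Finset.prod_congr rfl h2, h1, sgn_not]
      ring
    have hsum : ∑ ω : I → Bool, chi S ω = 0 := by
      have := Fintype.sum_bijective _ hinv.bijective (fun ω => chi S (Function.update ω i (!ω i)))
        (chi S) (fun ω => rfl)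
      simp only [hflip, Finset.sum_neg_distrib] at this
      linarith
    rw [expec, hsum, zero_div]

lemma kernel (z w : I → Bool) :
    ∑ S : Finset I, chi S z * chi S w
      = if z = w then (Fintype.card (I → Bool) : ℝ) else 0 := by
  have hstep : ∀ S : Finset I, chi S z * chi S w = ∏ i ∈ S, (sgn (z i) * sgn (w i)) := by
    intro S; rw [chi, chi, Finset.prod_mul_distrib]
  have hexp : ∑ S : Finset I, chi S z * chi S w
      = ∏ i : I, (sgn (z i) * sgn (w i) + 1) := by
    rw [Finset.prod_add]
    simp only [Finset.prod_const_one, mul_one]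
    rw [← Finset.powerset_univ]
    exact Finset.sum_congr rfl fun S _ => hstep S
  rcases eq_or_ne z w with rfl | hzw
  · rw [if_pos rfl, hexp]
    have : ∀ i : I, sgn (z i) * sgn (z i) + 1 = 2 := fun i => by rw [sgn_mul_self]; norm_num
    rw [Finset.prod_congr rfl fun i _ => this i, Finset.prod_const]
    simp [Fintype.card_fun]
  · rw [if_neg hzw, hexp]
    obtain ⟨i, hi⟩ := Function.ne_iff.mp hzw
    refine Finset.prod_eq_zero (Finset.mem_univ i) ?_
    have : sgn (z i) * sgn (w i) = -1 := by
      cases hz : z i <;> cases hw : w i <;> simp_all [sgn]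
    rw [this]; ring

lemma parseval (g h : (I → Bool) → ℝ) :
    ∑ S : Finset I, fhat g S * fhat h S = expec (fun ω => g ω * h ω) := by
  set N : ℝ := (Fintype.card (I → Bool) : ℝ) with hN
  have hN0 : N ≠ 0 := cardR_ne_zero
  have key : ∀ S : Finset I, fhat g S * fhat h S
      = (∑ z : I → Bool, ∑ w : I → Bool, g z * h w * (chi S z * chi S w)) / (N * N) := by
    intro S
    rw [fhat, fhat, expec, expec, div_mul_div_comm, Finset.sum_mul_sum]
    congr 1
    refine Finset.sum_congr rfl fun z _ => Finset.sum_congr rfl fun w _ => by ring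
  rw [Finset.sum_congr rfl fun S _ => key S, ← Finset.sum_div]
  rw [Finset.sum_comm]
  have hz : ∀ z : I → Bool,
      ∑ S : Finset I, ∑ w : I → Bool, g z * h w * (chi S z * chi S w)
        = g z * h z * N := by
    intro z
    rw [Finset.sum_comm]
    have : ∀ w : I → Bool, ∑ S : Finset I, g z * h w * (chi S z * chi S w)
        = g z * h w * (if z = w then N else 0) := by
      intro w
      rw [← Finset.mul_sum, kernel]
    rw [Finset.sum_congr rfl fun w _ => this w]
    simp [Finset.sum_ite_eq, mul_ite]
  rw [Finset.sum_congr rfl fun z _ => hz z, expec]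
  rw [Finset.sum_congr rfl (fun z _ => rfl : ∀ z ∈ Finset.univ, g z * h z * N = (g z * h z) * N),
    ← Finset.sum_mul, mul_div_mul_right _ _ hN0]

lemma inversion (g : (I → Bool) → ℝ) (ω : I → Bool) :
    ∑ S : Finset I, fhat g S * chi S ω = g ω := by
  set N : ℝ := (Fintype.card (I → Bool) : ℝ) with hN
  have hN0 : N ≠ 0 := cardR_ne_zero
  have key : ∀ S : Finset I, fhat g S * chi S ω
      = (∑ z : I → Bool, g z * (chi S z * chi S ω)) / N := by
    intro S
    rw [fhat, expec, div_mul_eq_mul_div, Finset.sum_mul]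
    congr 1
    exact Finset.sum_congr rfl fun z _ => by ring
  rw [Finset.sum_congr rfl fun S _ => key S, ← Finset.sum_div, Finset.sum_comm]
  have hz : ∀ z : I → Bool, ∑ S : Finset I, g z * (chi S z * chi S ω)
      = g z * (if z = ω then N else 0) := by
    intro z; rw [← Finset.mul_sum, kernel]
  rw [Finset.sum_congr rfl fun z _ => hz z]
  simp [Finset.sum_ite_eq, mul_ite, hN0]

lemma fhat_repr (c : Finset I → ℝ) (S : Finset I) :
    fhat (fun ω => ∑ T : Finset I, c T * chi T ω) S = c S := by
  rw [fhat]
  have : (fun ω => (∑ T : Finset I, c T * chi T ω) * chi S ω)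
      = fun ω => ∑ T : Finset I, c T * chi (symmDiff T S) ω := by
    funext ω
    rw [Finset.sum_mul]
    exact Finset.sum_congr rfl fun T _ => by rw [mul_assoc, chi_mul]
  rw [this, expec_sum_s11]
  have : ∀ T : Finset I, expec (fun ω : I → Bool => c T * chi (symmDiff T S) ω)
      = c T * (if symmDiff T S = ∅ then 1 else 0) := by
    intro T; rw [expec_mul_left, expec_chi]
  rw [Finset.sum_congr rfl fun T _ => this T]
  have hsd : ∀ T : Finset I, (symmDiff T S = ∅) ↔ T = S := by
    intro T
    constructor
    · intro h; simpa using symmDiff_eq_bot.mp h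
    · rintro rfl; simpa using symmDiff_self S
  simp only [hsd]
  simp [Finset.sum_ite_eq]

lemma condE_repr (g : (I → Bool) → ℝ) (A : Finset I) (ω : I → Bool) :
    condE g A ω = ∑ S : Finset I, (if S ⊆ A then fhat g S else 0) * chi S ω := by
  rw [condE]
  have hmerge : ∀ z : I → Bool,
      g (fun i => if i ∈ A then ω i else z i)
        = ∑ T : Finset I, fhat g T * (chi (T ∩ A) ω * chi (T \ A) z) := by
    intro z
    rw [← inversion g (fun i => if i ∈ A then ω i else z i)]
    refine Finset.sum_congr rfl fun T _ => ?_
    congr 1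
    rw [chi, chi, chi, ← Finset.prod_inter_mul_prod_diff T A]
    congr 1
    · exact Finset.prod_congr rfl fun i hi => by
        rw [if_pos (Finset.mem_inter.mp hi).2]
    · exact Finset.prod_congr rfl fun i hi => by
        rw [if_neg (Finset.mem_sdiff.mp hi).2]
  rw [show (fun z => g fun i => if i ∈ A then ω i else z i)
      = fun z => ∑ T : Finset I, fhat g T * (chi (T ∩ A) ω * chi (T \ A) z)
    from funext hmerge, expec_sum_s11]
  refine Finset.sum_congr rfl fun T _ => ?_
  have : expec (fun z : I → Bool => fhat g T * (chi (T ∩ A) ω * chi (T \ A) z))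
      = fhat g T * (chi (T ∩ A) ω * expec (chi (T \ A))) := by
    rw [show (fun z : I → Bool => fhat g T * (chi (T ∩ A) ω * chi (T \ A) z))
        = fun z => (fhat g T * chi (T ∩ A) ω) * chi (T \ A) z from funext fun z => by ring,
      expec_mul_left]
    ring
  rw [this, expec_chi]
  by_cases hTA : T ⊆ A
  · rw [if_pos ((Finset.sdiff_eq_empty_iff_subset).mpr hTA), if_pos hTA,
      Finset.inter_eq_left.mpr hTA]
    ring
  · rw [if_neg (fun h => hTA (Finset.sdiff_eq_empty_iff_subset.mp h)), if_neg hTA]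
    ring

lemma fhat_condE (g : (I → Bool) → ℝ) (A : Finset I) (S : Finset I) :
    fhat (condE g A) S = if S ⊆ A then fhat g S else 0 := by
  have : condE g A = fun ω => ∑ T : Finset I, (if T ⊆ A then fhat g T else 0) * chi T ω :=
    funext (condE_repr g A)
  rw [this, fhat_repr]

lemma fhat_sub (u v : (I → Bool) → ℝ) (S : Finset I) :
    fhat (fun ω => u ω - v ω) S = fhat u S - fhat v S := by
  rw [fhat, fhat, fhat, ← expec_sub]
  congr 1
  funext ω
  ring


lemma abs_le_supnorm (f : (I → Bool) → ℝ) (ω : I → Bool) : |f ω| ≤ supnorm f := by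
  rw [supnorm]
  exact le_ciSup (f := fun ω => |f ω|) (Set.Finite.bddAbove (Set.finite_range _)) ω

lemma supnorm_nonneg (f : (I → Bool) → ℝ) : 0 ≤ supnorm f :=
  (abs_nonneg (f (fun _ => false))).trans (abs_le_supnorm f _)

lemma pivInd_nonneg (f : (I → Bool) → ℝ) (B : Finset I) (ω : I → Bool) :
    0 ≤ pivInd f B ω := by
  rw [pivInd]; split <;> norm_num

/-- For disjoint `W, B ⊆ I`,
`Q[𝒮 ∩ B ≠ ∅ = 𝒮 ∩ W] ≤ 4 ‖f‖_∞² E[λ(B,W)²]`, where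
`λ(B,W) = P[Λ_B | F_{W^c}]`. -/
theorem spectral_pivotal_bound (f : (I → Bool) → ℝ) (B W : Finset I)
    (hBW : Disjoint B W) :
    (∑ S : Finset I, if (S ∩ B).Nonempty ∧ S ∩ W = ∅ then fhat f S ^ 2 else 0)
      ≤ 4 * supnorm f ^ 2 *
        expec (fun ω => condE (pivInd f B) ((univ : Finset I) \ W) ω ^ 2) := by
  classical
  set M := supnorm f with hM
  have hM0 : 0 ≤ M := supnorm_nonneg f
  set g : (I → Bool) → ℝ := fun ω => f ω - condE f ((univ : Finset I) \ B) ω with hgdef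
  set h : (I → Bool) → ℝ := condE g ((univ : Finset I) \ W) with hhdef
  -- Fourier coefficients of h
  have hsubB : ∀ S : Finset I, S ⊆ (univ : Finset I) \ B ↔ ¬(S ∩ B).Nonempty := by
    intro S
    rw [Finset.subset_sdiff, Finset.not_nonempty_iff_eq_empty,
      ← Finset.disjoint_iff_inter_eq_empty]
    simp [Finset.subset_univ]
  have hsubW : ∀ S : Finset I, S ⊆ (univ : Finset I) \ W ↔ S ∩ W = ∅ := by
    intro S
    rw [Finset.subset_sdiff, ← Finset.disjoint_iff_inter_eq_empty]
    simp [Finset.subset_univ]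
  have hg : ∀ S : Finset I, fhat g S = if (S ∩ B).Nonempty then fhat f S else 0 := by
    intro S
    rw [hgdef, fhat_sub, fhat_condE]
    by_cases hSB : (S ∩ B).Nonempty
    · rw [if_neg ((hsubB S).not.mpr (not_not.mpr hSB)), if_pos hSB, sub_zero]
    · rw [if_pos ((hsubB S).mpr hSB), if_neg hSB, sub_self]
  have hh : ∀ S : Finset I,
      fhat h S = if (S ∩ B).Nonempty ∧ S ∩ W = ∅ then fhat f S else 0 := by
    intro S
    rw [hhdef, fhat_condE, hg]
    by_cases hSW : S ∩ W = ∅ <;> by_cases hSB : (S ∩ B).Nonempty <;>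
      simp [hSW, hSB, (hsubW S)]
  -- LHS = E[h^2]
  have hLHS : (∑ S : Finset I, if (S ∩ B).Nonempty ∧ S ∩ W = ∅ then fhat f S ^ 2 else 0)
      = expec (fun ω => h ω ^ 2) := by
    have : (fun ω => h ω ^ 2) = fun ω => h ω * h ω := funext fun ω => sq (h ω)
    rw [this, ← parseval]
    refine Finset.sum_congr rfl fun S _ => ?_
    rw [hh]
    split <;> simp [sq]
  -- pointwise bound on g
  have hgbound : ∀ ω, |g ω| ≤ 2 * M * pivInd f B ω := by
    intro ω
    rw [pivInd]
    split
    · rename_i hpiv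
      rw [mul_one]
      have h1 : |f ω| ≤ M := abs_le_supnorm f ω
      have h2 : |condE f ((univ : Finset I) \ B) ω| ≤ M := by
        have := abs_expec_le
          (u := fun z : I → Bool =>
            f fun i => if i ∈ (univ : Finset I) \ B then ω i else z i)
          (v := fun _ : I → Bool => M) (fun z => abs_le_supnorm f _)
        rwa [expec_const, condE] at *
      calc |g ω| ≤ |f ω| + |condE f ((univ : Finset I) \ B) ω| := abs_sub _ _
        _ ≤ 2 * M := by linarith
    · rename_i hpiv
      push_neg at hpiv
      have hconst : condE f ((univ : Finset I) \ B) ω = f ω := by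
        rw [condE]
        have : ∀ z : I → Bool, f (fun i => if i ∈ (univ : Finset I) \ B then ω i else z i)
            = f ω := by
          intro z
          apply hpiv
          intro i hiB
          rw [if_pos (Finset.mem_sdiff.mpr ⟨Finset.mem_univ i, hiB⟩)]
        rw [show (fun z : I → Bool => f fun i => if i ∈ (univ : Finset I) \ B then ω i else z i)
            = fun _ => f ω from funext this, expec_const]
      rw [hgdef]
      simp [hconst]
  -- pointwise bound on h
  have hhbound : ∀ ω, |h ω| ≤ 2 * M * condE (pivInd f B) ((univ : Finset I) \ W) ω := by
    intro ω
    rw [hhdef, condE, condE, ← expec_mul_left (2 * M)]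
    exact abs_expec_le fun z => hgbound _
  calc (∑ S : Finset I, if (S ∩ B).Nonempty ∧ S ∩ W = ∅ then fhat f S ^ 2 else 0)
      = expec (fun ω => h ω ^ 2) := hLHS
    _ ≤ expec (fun ω => 4 * M ^ 2 * condE (pivInd f B) ((univ : Finset I) \ W) ω ^ 2) := by
        apply expec_mono
        intro ω
        have h1 : |h ω| ≤ 2 * M * condE (pivInd f B) ((univ : Finset I) \ W) ω := hhbound ω
        have := pow_le_pow_left₀ (abs_nonneg (h ω)) h1 2
        rw [sq_abs] at this
        calc h ω ^ 2 ≤ (2 * M * condE (pivInd f B) ((univ : Finset I) \ W) ω) ^ 2 := this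
          _ = 4 * M ^ 2 * condE (pivInd f B) ((univ : Finset I) \ W) ω ^ 2 := by ring
    _ = 4 * M ^ 2 * expec (fun ω => condE (pivInd f B) ((univ : Finset I) \ W) ω ^ 2) :=
        expec_mul_left _ _
end

section
/- Large deviation principle for correlated indicators: let x, y be random vectors in {0,1}^n with y_i ≤ x_i a.s. for all i, X = ∑ x_i, Y = ∑ y_i. Suppose there is a ∈ (0,1] such that for each j ∈ [n] and every I ⊆ [n]∖{j}: P[y_j=1 | y_i=0 ∀i∈I] ≥ a·P[x_j=1 | y_i=0 ∀i∈I]. Then P[Y=0 | X>0] ≤ a^{-1}·E[e^{-aX/e} | X>0]. -/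
open MeasureTheory Real Finset

/-- **Large deviation principle for correlated indicators.** Let `x, y` be random
vectors in `{0,1}^n` with `y_i ≤ x_i` a.s., `X = ∑ x_i`, `Y = ∑ y_i`. If there is
`a ∈ (0,1]` such that `P[y_j = 1, y_i = 0 ∀ i ∈ I] ≥ a ⬝ P[x_j = 1, y_i = 0 ∀ i ∈ I]`
for every `j ∉ I ⊆ [n]`, then `P[Y = 0 | X > 0] ≤ a⁻¹ E[e^{-aX/e} | X > 0]`. -/
theorem large_deviation_correlated {Ω : Type*} [MeasurableSpace Ω]
    (μ : Measure Ω) [IsProbabilityMeasure μ]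
    (n : ℕ) (x y : Ω → Fin n → Bool)
    (hxm : ∀ i, MeasurableSet {ω | x ω i = true})
    (hym : ∀ i, MeasurableSet {ω | y ω i = true})
    (hyx : ∀ᵐ ω ∂μ, ∀ i, y ω i ≤ x ω i)
    (a : ℝ) (ha0 : 0 < a) (ha1 : a ≤ 1)
    (hcond : ∀ (j : Fin n) (I : Finset (Fin n)), j ∉ I →
      a * (μ ({ω | x ω j = true} ∩ {ω | ∀ i ∈ I, y ω i = false})).toReal ≤
        (μ ({ω | y ω j = true} ∩ {ω | ∀ i ∈ I, y ω i = false})).toReal)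
    (X Y : Ω → ℝ)
    (hX : ∀ ω, X ω = ∑ i : Fin n, (if x ω i then (1 : ℝ) else 0))
    (hY : ∀ ω, Y ω = ∑ i : Fin n, (if y ω i then (1 : ℝ) else 0))
    (hpos : 0 < (μ {ω | 0 < X ω}).toReal) :
    (μ ({ω | Y ω = 0} ∩ {ω | 0 < X ω})).toReal / (μ {ω | 0 < X ω}).toReal
      ≤ a⁻¹ * ((∫ ω in {ω | 0 < X ω}, exp (-a * X ω / exp 1) ∂μ)
          / (μ {ω | 0 < X ω}).toReal) := by
  classical
  set t : ℝ := Real.exp (-1) with htdef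
  have ht0 : 0 < t := Real.exp_pos _
  have ht1 : t ≤ 1 := by
    rw [htdef, show (1:ℝ) = Real.exp 0 by simp]
    exact Real.exp_le_exp.mpr (by norm_num)
  have hte : Real.exp 1 * t = 1 := by
    rw [htdef, ← Real.exp_add]; simp
  -- measurability of basic pieces
  have mxi : ∀ j, Measurable (fun ω => if x ω j then (1:ℝ) else 0) := fun j =>
    Measurable.ite (hxm j) measurable_const measurable_const
  have myi : ∀ j, Measurable (fun ω => if y ω j then (1:ℝ) else 0) := fun j =>
    Measurable.ite (hym j) measurable_const measurable_const
  have mX : Measurable X := by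
    have hXeq : X = fun ω => ∑ i : Fin n, (if x ω i then (1:ℝ) else 0) := funext hX
    rw [hXeq]
    exact Finset.measurable_sum _ (fun i _ => mxi i)
  have mY : Measurable Y := by
    have hYeq : Y = fun ω => ∑ i : Fin n, (if y ω i then (1:ℝ) else 0) := funext hY
    rw [hYeq]
    exact Finset.measurable_sum _ (fun i _ => myi i)
  have mE : Measurable fun ω => Real.exp (-Y ω) := Real.measurable_exp.comp mY.neg
  have hY0 : ∀ ω, 0 ≤ Y ω := by
    intro ω
    rw [hY ω]
    exact Finset.sum_nonneg fun i _ => by split_ifs <;> norm_num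
  have hX0 : ∀ ω, 0 ≤ X ω := by
    intro ω
    rw [hX ω]
    exact Finset.sum_nonneg fun i _ => by split_ifs <;> norm_num
  have hEle1 : ∀ ω, Real.exp (-Y ω) ≤ 1 := by
    intro ω
    rw [show (1:ℝ) = Real.exp 0 by simp]
    exact Real.exp_le_exp.mpr (by linarith [hY0 ω])
  have hXn : ∀ ω, X ω ≤ n := by
    intro ω
    rw [hX ω]
    calc ∑ i : Fin n, (if x ω i then (1:ℝ) else 0) ≤ ∑ _i : Fin n, (1:ℝ) :=
          Finset.sum_le_sum (fun i _ => by split_ifs <;> norm_num)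
      _ = n := by simp
  have hYn : ∀ ω, Y ω ≤ n := by
    intro ω
    rw [hY ω]
    calc ∑ i : Fin n, (if y ω i then (1:ℝ) else 0) ≤ ∑ _i : Fin n, (1:ℝ) :=
          Finset.sum_le_sum (fun i _ => by split_ifs <;> norm_num)
      _ = n := by simp
  have hX1 : ∀ ω, 0 < X ω → 1 ≤ X ω := by
    intro ω h
    rw [hX ω] at h ⊢
    by_cases hall : ∀ i : Fin n, x ω i = false
    · have hz : (∑ i : Fin n, (if x ω i then (1:ℝ) else 0)) = 0 :=
        Finset.sum_eq_zero fun i _ => by simp [hall i]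
      rw [hz] at h
      exact absurd h (lt_irrefl 0)
    · push_neg at hall
      obtain ⟨i, hi⟩ := hall
      have hxi : x ω i = true := by
        cases hx' : x ω i
        · exact absurd hx' hi
        · rfl
      calc (1:ℝ) = (if x ω i then (1:ℝ) else 0) := by simp [hxi]
        _ ≤ ∑ i : Fin n, (if x ω i then (1:ℝ) else 0) :=
            Finset.single_le_sum (f := fun i => if x ω i then (1:ℝ) else 0)
              (fun i _ => by split_ifs <;> norm_num) (mem_univ i)
  have hY1 : ∀ ω, Y ω ≠ 0 → 1 ≤ Y ω := by
    intro ω h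
    rw [hY ω] at h ⊢
    by_cases hall : ∀ i : Fin n, y ω i = false
    · exact absurd (Finset.sum_eq_zero fun i _ => by simp [hall i]) h
    · push_neg at hall
      obtain ⟨i, hi⟩ := hall
      have hyi : y ω i = true := by
        cases hy' : y ω i
        · exact absurd hy' hi
        · rfl
      calc (1:ℝ) = (if y ω i then (1:ℝ) else 0) := by simp [hyi]
        _ ≤ ∑ i : Fin n, (if y ω i then (1:ℝ) else 0) :=
            Finset.single_le_sum (f := fun i => if y ω i then (1:ℝ) else 0)
              (fun i _ => by split_ifs <;> norm_num) (mem_univ i)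
  -- integrability helper
  have intbdd : ∀ (f : Ω → ℝ), Measurable f → ∀ C : ℝ, (∀ ω, |f ω| ≤ C) → Integrable f μ := by
    intro f hf C hC
    exact (integrable_const C).mono' hf.aestronglyMeasurable
      (Filter.Eventually.of_forall fun ω => by simpa [Real.norm_eq_abs] using hC ω)
  -- the auxiliary product function
  set G : Fin n → Ω → ℝ := fun j ω => ∏ i ∈ Finset.univ.erase j, (if y ω i then t else 1)
    with hGdef
  have mG : ∀ j, Measurable (G j) := by
    intro j
    exact Finset.measurable_prod _ fun i _ =>
      Measurable.ite (hym i) measurable_const measurable_const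
  have hGfac : ∀ j ω, (if y ω j then t else 1) * G j ω
      = ∏ i : Fin n, (if y ω i then t else 1) := fun j ω =>
    Finset.mul_prod_erase univ (fun i => if y ω i then t else 1) (mem_univ j)
  have hEprod : ∀ ω, Real.exp (-Y ω) = ∏ i : Fin n, (if y ω i then t else 1) := by
    intro ω
    have h1 : -Y ω = ∑ i : Fin n, (if y ω i then (-1:ℝ) else 0) := by
      rw [hY ω, ← Finset.sum_neg_distrib]
      exact Finset.sum_congr rfl fun i _ => by split_ifs <;> norm_num
    rw [h1, Real.exp_sum]
    exact Finset.prod_congr rfl fun i _ => by split_ifs <;> simp [htdef]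
  have hGpos : ∀ j ω, 0 < G j ω := fun j ω =>
    Finset.prod_pos fun i _ => by split_ifs <;> norm_num [ht0]
  have hGle1 : ∀ j ω, G j ω ≤ 1 :=
    fun j ω => Finset.prod_le_one (fun i _ => by split_ifs <;> norm_num [ht0.le])
      (fun i _ => by split_ifs <;> norm_num [ht1])
  have hEleG : ∀ j ω, Real.exp (-Y ω) ≤ G j ω := by
    intro j ω
    rw [hEprod ω, ← hGfac j ω]
    have h1 : (if y ω j then t else 1) ≤ 1 := by split_ifs <;> norm_num [ht1]
    calc (if y ω j then t else 1) * G j ω ≤ 1 * G j ω :=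
          mul_le_mul_of_nonneg_right h1 (hGpos j ω).le
      _ = G j ω := one_mul _
  have hGyj : ∀ j ω, y ω j = true → G j ω = Real.exp 1 * Real.exp (-Y ω) := by
    intro j ω hyj
    have h := hGfac j ω
    rw [hyj] at h
    simp only [if_true] at h
    rw [hEprod ω, ← h, ← mul_assoc, hte, one_mul]
  -- sets and indicators
  have mB : ∀ I : Finset (Fin n), MeasurableSet {ω | ∀ i ∈ I, y ω i = false} := by
    intro I
    have h1 : {ω | ∀ i ∈ I, y ω i = false} = ⋂ i ∈ I, {ω | y ω i = true}ᶜ := by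
      ext ω
      simp
    rw [h1]
    exact MeasurableSet.biInter I.countable_toSet fun i _ => (hym i).compl
  have int_ind : ∀ u : Set Ω, MeasurableSet u →
      ∫ ω, u.indicator (1 : Ω → ℝ) ω ∂μ = (μ u).toReal := fun u hu =>
    integral_indicator_one hu
  have indbd : ∀ (u : Set Ω) ω, |u.indicator (1 : Ω → ℝ) ω| ≤ 1 := by
    intro u ω
    by_cases h : ω ∈ u
    · rw [Set.indicator_of_mem h, Pi.one_apply]; norm_num
    · rw [Set.indicator_of_notMem h]; norm_num
  have intbdd_ind : ∀ u : Set Ω, MeasurableSet u →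
      Integrable (u.indicator (1 : Ω → ℝ)) μ := by
    intro u hu
    exact intbdd _ (measurable_one.indicator hu) 1 (indbd u)
  have prod_ind : ∀ (ω : Ω) (I : Finset (Fin n)),
      (∏ i ∈ I, (if y ω i then (0:ℝ) else 1))
        = (if ∀ i ∈ I, y ω i = false then (1:ℝ) else 0) := by
    intro ω I
    by_cases h : ∀ i ∈ I, y ω i = false
    · rw [if_pos h]
      exact Finset.prod_eq_one fun i hi => by rw [h i hi]; simp
    · rw [if_neg h]
      push_neg at h
      obtain ⟨i, hiI, hi⟩ := h
      have hyi : y ω i = true := by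
        cases h' : y ω i
        · exact absurd h' hi
        · rfl
      exact Finset.prod_eq_zero hiI (by simp [hyi])
  -- expansion of G as convex combination of indicators
  have hGexp : ∀ (j : Fin n) (ω : Ω), G j ω =
      ∑ I ∈ (Finset.univ.erase j).powerset,
        ((1-t)^I.card * t^((Finset.univ.erase j).card - I.card)) *
          (if ∀ i ∈ I, y ω i = false then (1:ℝ) else 0) := by
    intro j ω
    have h1 : G j ω = ∏ i ∈ Finset.univ.erase j,
        (((1-t) * (if y ω i then (0:ℝ) else 1)) + t) := by
      rw [hGdef]
      exact Finset.prod_congr rfl fun i _ => by split_ifs <;> ring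
    rw [h1, Finset.prod_add]
    refine Finset.sum_congr rfl fun I hI => ?_
    rw [Finset.mem_powerset] at hI
    rw [Finset.prod_const, Finset.card_sdiff_of_subset hI, Finset.prod_mul_distrib,
      Finset.prod_const, prod_ind ω I]
    ring
  -- expansion of integrals against G
  have int_expand : ∀ (j : Fin n) (v : Ω → Fin n → Bool),
      (∀ i, MeasurableSet {ω | v ω i = true}) →
      ∫ ω, (if v ω j then (1:ℝ) else 0) * G j ω ∂μ =
        ∑ I ∈ (Finset.univ.erase j).powerset,
          ((1-t)^I.card * t^((Finset.univ.erase j).card - I.card)) *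
            (μ ({ω | v ω j = true} ∩ {ω | ∀ i ∈ I, y ω i = false})).toReal := by
    intro j v hvm
    have hptw : ∀ ω, (if v ω j then (1:ℝ) else 0) * G j ω =
        ∑ I ∈ (Finset.univ.erase j).powerset,
          ((1-t)^I.card * t^((Finset.univ.erase j).card - I.card)) *
            (({ω | v ω j = true} ∩ {ω | ∀ i ∈ I, y ω i = false}).indicator
              (1 : Ω → ℝ) ω) := by
      intro ω
      rw [hGexp j ω, Finset.mul_sum]
      refine Finset.sum_congr rfl fun I _ => ?_
      by_cases h1 : v ω j = true
      · by_cases h2 : ∀ i ∈ I, y ω i = false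
        · rw [Set.indicator_of_mem
              (show ω ∈ {ω | v ω j = true} ∩ {ω | ∀ i ∈ I, y ω i = false} from ⟨h1, h2⟩),
            if_pos h1, if_pos h2, Pi.one_apply]
          ring
        · rw [Set.indicator_of_notMem (fun hc => h2 hc.2), if_pos h1, if_neg h2]
          ring
      · rw [Set.indicator_of_notMem (fun hc => h1 hc.1), if_neg h1]
        ring
    have e1 : ∫ ω, (if v ω j then (1:ℝ) else 0) * G j ω ∂μ
        = ∫ ω, (∑ I ∈ (Finset.univ.erase j).powerset,
            ((1-t)^I.card * t^((Finset.univ.erase j).card - I.card)) *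
              (({ω | v ω j = true} ∩ {ω | ∀ i ∈ I, y ω i = false}).indicator
                (1 : Ω → ℝ) ω)) ∂μ :=
      integral_congr_ae (Filter.Eventually.of_forall fun ω => hptw ω)
    have e2 : ∫ ω, (∑ I ∈ (Finset.univ.erase j).powerset,
            ((1-t)^I.card * t^((Finset.univ.erase j).card - I.card)) *
              (({ω | v ω j = true} ∩ {ω | ∀ i ∈ I, y ω i = false}).indicator
                (1 : Ω → ℝ) ω)) ∂μ
        = ∑ I ∈ (Finset.univ.erase j).powerset, ∫ ω,
            ((1-t)^I.card * t^((Finset.univ.erase j).card - I.card)) *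
              (({ω | v ω j = true} ∩ {ω | ∀ i ∈ I, y ω i = false}).indicator
                (1 : Ω → ℝ) ω) ∂μ :=
      integral_finset_sum _ (fun I _ =>
        (intbdd_ind _ ((hvm j).inter (mB I))).const_mul _)
    rw [e1, e2]
    refine Finset.sum_congr rfl fun I _ => ?_
    rw [integral_const_mul, int_ind _ ((hvm j).inter (mB I))]
  -- integrability facts
  have int_xE : ∀ j, Integrable (fun ω => (if x ω j then (1:ℝ) else 0) * Real.exp (-Y ω)) μ := by
    intro j
    refine intbdd _ ((mxi j).mul mE) 1 fun ω => ?_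
    rw [abs_mul]
    have h1 : |if x ω j then (1:ℝ) else 0| ≤ 1 := by split_ifs <;> norm_num
    have h2 : |Real.exp (-Y ω)| ≤ 1 := by
      rw [abs_of_pos (Real.exp_pos _)]; exact hEle1 ω
    nlinarith [abs_nonneg (if x ω j then (1:ℝ) else 0), abs_nonneg (Real.exp (-Y ω))]
  have int_yE : ∀ j, Integrable (fun ω => (if y ω j then (1:ℝ) else 0) * Real.exp (-Y ω)) μ := by
    intro j
    refine intbdd _ ((myi j).mul mE) 1 fun ω => ?_
    rw [abs_mul]
    have h1 : |if y ω j then (1:ℝ) else 0| ≤ 1 := by split_ifs <;> norm_num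
    have h2 : |Real.exp (-Y ω)| ≤ 1 := by
      rw [abs_of_pos (Real.exp_pos _)]; exact hEle1 ω
    nlinarith [abs_nonneg (if y ω j then (1:ℝ) else 0), abs_nonneg (Real.exp (-Y ω))]
  have int_xG : ∀ j, Integrable (fun ω => (if x ω j then (1:ℝ) else 0) * G j ω) μ := by
    intro j
    refine intbdd _ ((mxi j).mul (mG j)) 1 fun ω => ?_
    rw [abs_mul]
    have h1 : |if x ω j then (1:ℝ) else 0| ≤ 1 := by split_ifs <;> norm_num
    have h2 : |G j ω| ≤ 1 := by rw [abs_of_pos (hGpos j ω)]; exact hGle1 j ω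
    nlinarith [abs_nonneg (if x ω j then (1:ℝ) else 0), abs_nonneg (G j ω)]
  have int_XE : Integrable (fun ω => X ω * Real.exp (-Y ω)) μ := by
    refine intbdd _ (mX.mul mE) n fun ω => ?_
    rw [abs_mul, abs_of_nonneg (hX0 ω), abs_of_pos (Real.exp_pos _)]
    nlinarith [hXn ω, hEle1 ω, hX0 ω, Real.exp_pos (-Y ω)]
  have int_YE : Integrable (fun ω => Y ω * Real.exp (-Y ω)) μ := by
    refine intbdd _ (mY.mul mE) n fun ω => ?_
    rw [abs_mul, abs_of_nonneg (hY0 ω), abs_of_pos (Real.exp_pos _)]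
    nlinarith [hYn ω, hEle1 ω, hY0 ω, Real.exp_pos (-Y ω)]
  -- the key inequality, for each coordinate j
  have key : ∀ j : Fin n,
      a * ∫ ω, (if x ω j then (1:ℝ) else 0) * Real.exp (-Y ω) ∂μ ≤
        Real.exp 1 * ∫ ω, (if y ω j then (1:ℝ) else 0) * Real.exp (-Y ω) ∂μ := by
    intro j
    have step1 : ∫ ω, (if x ω j then (1:ℝ) else 0) * Real.exp (-Y ω) ∂μ ≤
        ∫ ω, (if x ω j then (1:ℝ) else 0) * G j ω ∂μ := by
      refine integral_mono (int_xE j) (int_xG j) fun ω => ?_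
      exact mul_le_mul_of_nonneg_left (hEleG j ω) (by split_ifs <;> norm_num)
    have step2 : a * ∫ ω, (if x ω j then (1:ℝ) else 0) * G j ω ∂μ ≤
        ∫ ω, (if y ω j then (1:ℝ) else 0) * G j ω ∂μ := by
      rw [int_expand j x hxm, int_expand j y hym, Finset.mul_sum]
      refine Finset.sum_le_sum fun I hI => ?_
      have hjI : j ∉ I := fun hj => by
        have h1 := Finset.mem_powerset.mp hI hj
        exact (Finset.mem_erase.mp h1).1 rfl
      have hc : 0 ≤ (1-t)^I.card * t^((Finset.univ.erase j).card - I.card) := by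
        have h1 : (0:ℝ) ≤ 1 - t := by linarith
        positivity
      calc a * (((1-t)^I.card * t^((Finset.univ.erase j).card - I.card)) *
            (μ ({ω | x ω j = true} ∩ {ω | ∀ i ∈ I, y ω i = false})).toReal)
          = ((1-t)^I.card * t^((Finset.univ.erase j).card - I.card)) *
            (a * (μ ({ω | x ω j = true} ∩ {ω | ∀ i ∈ I, y ω i = false})).toReal) := by ring
        _ ≤ ((1-t)^I.card * t^((Finset.univ.erase j).card - I.card)) *
            (μ ({ω | y ω j = true} ∩ {ω | ∀ i ∈ I, y ω i = false})).toReal :=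
            mul_le_mul_of_nonneg_left (hcond j I hjI) hc
    have step3 : ∫ ω, (if y ω j then (1:ℝ) else 0) * G j ω ∂μ =
        Real.exp 1 * ∫ ω, (if y ω j then (1:ℝ) else 0) * Real.exp (-Y ω) ∂μ := by
      rw [← integral_const_mul]
      refine integral_congr_ae (Filter.Eventually.of_forall fun ω => ?_)
      dsimp only
      by_cases h1 : y ω j = true
      · rw [hGyj j ω h1]
        simp only [h1, if_true]
        ring
      · rw [if_neg h1]
        ring
    calc a * ∫ ω, (if x ω j then (1:ℝ) else 0) * Real.exp (-Y ω) ∂μ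
        ≤ a * ∫ ω, (if x ω j then (1:ℝ) else 0) * G j ω ∂μ :=
          mul_le_mul_of_nonneg_left step1 ha0.le
      _ ≤ ∫ ω, (if y ω j then (1:ℝ) else 0) * G j ω ∂μ := step2
      _ = Real.exp 1 * ∫ ω, (if y ω j then (1:ℝ) else 0) * Real.exp (-Y ω) ∂μ := step3
  -- summing over j : the core inequality
  have star : a * ∫ ω, X ω * Real.exp (-Y ω) ∂μ
      ≤ Real.exp 1 * ∫ ω, Y ω * Real.exp (-Y ω) ∂μ := by
    have hXsum : ∫ ω, X ω * Real.exp (-Y ω) ∂μ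
        = ∑ j : Fin n, ∫ ω, (if x ω j then (1:ℝ) else 0) * Real.exp (-Y ω) ∂μ := by
      have e1 : ∫ ω, X ω * Real.exp (-Y ω) ∂μ
          = ∫ ω, (∑ j : Fin n, (if x ω j then (1:ℝ) else 0) * Real.exp (-Y ω)) ∂μ :=
        integral_congr_ae (Filter.Eventually.of_forall fun ω => by
          dsimp only; rw [hX ω, Finset.sum_mul])
      rw [e1]
      exact integral_finset_sum _ fun j _ => int_xE j
    have hYsum : ∫ ω, Y ω * Real.exp (-Y ω) ∂μ
        = ∑ j : Fin n, ∫ ω, (if y ω j then (1:ℝ) else 0) * Real.exp (-Y ω) ∂μ := by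
      have e1 : ∫ ω, Y ω * Real.exp (-Y ω) ∂μ
          = ∫ ω, (∑ j : Fin n, (if y ω j then (1:ℝ) else 0) * Real.exp (-Y ω)) ∂μ :=
        integral_congr_ae (Filter.Eventually.of_forall fun ω => by
          dsimp only; rw [hY ω, Finset.sum_mul])
      rw [e1]
      exact integral_finset_sum _ fun j _ => int_yE j
    rw [hXsum, hYsum, Finset.mul_sum, Finset.mul_sum]
    exact Finset.sum_le_sum fun j _ => key j
  -- measurable sets for the final step
  have mSX : MeasurableSet {ω | 0 < X ω} := measurableSet_lt measurable_const mX
  have mS0 : MeasurableSet ({ω | Y ω = 0} ∩ {ω | 0 < X ω}) := by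
    refine MeasurableSet.inter ?_ mSX
    exact mY (measurableSet_singleton 0)
  -- tangent line inequality for exp
  have tangent : ∀ s r : ℝ, Real.exp r * (1 + s - r) ≤ Real.exp s := by
    intro s r
    have h1 : (s - r) + 1 ≤ Real.exp (s - r) := Real.add_one_le_exp _
    calc Real.exp r * (1 + s - r) = Real.exp r * ((s - r) + 1) := by ring
      _ ≤ Real.exp r * Real.exp (s - r) :=
          mul_le_mul_of_nonneg_left h1 (Real.exp_pos r).le
      _ = Real.exp s := by rw [← Real.exp_add]; ring_nf
  -- pointwise inequality
  have ptw : ∀ᵐ ω ∂μ,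
      a * (({ω | Y ω = 0} ∩ {ω | 0 < X ω}).indicator (1 : Ω → ℝ) ω)
        + Real.exp 1 * (Y ω * Real.exp (-Y ω)) - a * (X ω * Real.exp (-Y ω))
      ≤ ({ω | 0 < X ω}.indicator (1 : Ω → ℝ) ω) * Real.exp (-a * X ω / Real.exp 1) := by
    filter_upwards [hyx] with ω hω
    have hYX : Y ω ≤ X ω := by
      rw [hX ω, hY ω]
      refine Finset.sum_le_sum fun i _ => ?_
      have h1 := hω i
      cases hyi : y ω i
      · rw [if_neg Bool.false_ne_true]
        split_ifs <;> norm_num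
      · rw [hyi] at h1
        have hxi : x ω i = true := by
          cases hb : x ω i
          · rw [hb] at h1
            exact absurd h1 (by decide)
          · rfl
        simp [hyi, hxi]
    by_cases hm : Y ω = 0
    · by_cases hk : 0 < X ω
      · have h1 : (1:ℝ) ≤ X ω := hX1 ω hk
        have hmem : ω ∈ {ω | Y ω = 0} ∩ {ω | 0 < X ω} := ⟨hm, hk⟩
        have hmem2 : ω ∈ {ω | 0 < X ω} := hk
        rw [Set.indicator_of_mem hmem, Set.indicator_of_mem hmem2, hm]
        simp only [Pi.one_apply, neg_zero, Real.exp_zero, mul_one, zero_mul, mul_zero,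
          add_zero, one_mul]
        have h2 : a - a * X ω ≤ 0 := by nlinarith
        have h3 : 0 < Real.exp (-a * X ω / Real.exp 1) := Real.exp_pos _
        nlinarith [h2, h3]
      · have hXz : X ω = 0 := le_antisymm (not_lt.mp hk) (hX0 ω)
        have hmem : ω ∉ {ω | Y ω = 0} ∩ {ω | 0 < X ω} := fun h => hk h.2
        have hmem2 : ω ∉ {ω | 0 < X ω} := hk
        rw [Set.indicator_of_notMem hmem, Set.indicator_of_notMem hmem2, hm, hXz]
        simp
    · have hm1 : (1:ℝ) ≤ Y ω := hY1 ω hm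
      have hk : 0 < X ω := lt_of_lt_of_le (lt_of_lt_of_le one_pos hm1) hYX
      have hmem : ω ∉ {ω | Y ω = 0} ∩ {ω | 0 < X ω} := fun h => hm h.1
      have hmem2 : ω ∈ {ω | 0 < X ω} := hk
      rw [Set.indicator_of_notMem hmem, Set.indicator_of_mem hmem2]
      simp only [Pi.one_apply, mul_zero, zero_add, one_mul]
      have hexp : Real.exp 1 * (Y ω * Real.exp (-Y ω)) - a * (X ω * Real.exp (-Y ω)) =
          Real.exp (1 - Y ω) * (1 + (-a * X ω / Real.exp 1) - (1 - Y ω)) := by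
        have h1 : Real.exp (1 - Y ω) = Real.exp 1 * Real.exp (-Y ω) := by
          rw [← Real.exp_add]; ring_nf
        rw [h1]
        have h2 : Real.exp 1 ≠ 0 := (Real.exp_pos 1).ne'
        field_simp
        ring
      rw [hexp]
      exact tangent (-a * X ω / Real.exp 1) (1 - Y ω)
  -- integrate the pointwise inequality
  have int_ind0 : Integrable
      (({ω | Y ω = 0} ∩ {ω | 0 < X ω}).indicator (1 : Ω → ℝ)) μ :=
    intbdd_ind _ mS0
  have mExpA : Measurable fun ω => Real.exp (-a * X ω / Real.exp 1) :=
    Real.measurable_exp.comp ((mX.const_mul (-a)).div_const _)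
  have int_R : Integrable
      (fun ω => ({ω | 0 < X ω}.indicator (1 : Ω → ℝ) ω) *
        Real.exp (-a * X ω / Real.exp 1)) μ := by
    refine intbdd _ ((measurable_one.indicator mSX).mul mExpA) 1 fun ω => ?_
    rw [abs_mul]
    have h1 : |{ω | 0 < X ω}.indicator (1 : Ω → ℝ) ω| ≤ 1 := indbd _ ω
    have h2 : |Real.exp (-a * X ω / Real.exp 1)| ≤ 1 := by
      rw [abs_of_pos (Real.exp_pos _)]
      have hx0 := hX0 ω
      have hnum : -a * X ω ≤ 0 := by nlinarith
      have hdiv : -a * X ω / Real.exp 1 ≤ 0 := by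
        rw [div_nonpos_iff]
        exact Or.inr ⟨hnum, (Real.exp_pos 1).le⟩
      calc Real.exp (-a * X ω / Real.exp 1) ≤ Real.exp 0 := Real.exp_le_exp.mpr hdiv
        _ = 1 := Real.exp_zero
    nlinarith [abs_nonneg ({ω | 0 < X ω}.indicator (1 : Ω → ℝ) ω),
      abs_nonneg (Real.exp (-a * X ω / Real.exp 1))]
  have int_L : Integrable
      (fun ω => a * (({ω | Y ω = 0} ∩ {ω | 0 < X ω}).indicator (1 : Ω → ℝ) ω)
        + Real.exp 1 * (Y ω * Real.exp (-Y ω)) - a * (X ω * Real.exp (-Y ω))) μ := by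
    exact (((int_ind0.const_mul a).add (int_YE.const_mul (Real.exp 1))).sub
      (int_XE.const_mul a))
  have hmono := integral_mono_ae int_L int_R ptw
  have hLval : ∫ ω, (a * (({ω | Y ω = 0} ∩ {ω | 0 < X ω}).indicator (1 : Ω → ℝ) ω)
        + Real.exp 1 * (Y ω * Real.exp (-Y ω)) - a * (X ω * Real.exp (-Y ω))) ∂μ
      = a * (μ ({ω | Y ω = 0} ∩ {ω | 0 < X ω})).toReal
        + Real.exp 1 * ∫ ω, Y ω * Real.exp (-Y ω) ∂μ
        - a * ∫ ω, X ω * Real.exp (-Y ω) ∂μ := by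
    have intA : Integrable
        (fun ω => a * (({ω | Y ω = 0} ∩ {ω | 0 < X ω}).indicator (1 : Ω → ℝ) ω)) μ := by
      exact int_ind0.const_mul a
    have intB : Integrable (fun ω => Real.exp 1 * (Y ω * Real.exp (-Y ω))) μ := by
      exact int_YE.const_mul _
    have intC : Integrable (fun ω => a * (X ω * Real.exp (-Y ω))) μ := by
      exact int_XE.const_mul a
    have e1 : ∫ ω, (a * (({ω | Y ω = 0} ∩ {ω | 0 < X ω}).indicator (1 : Ω → ℝ) ω)
          + Real.exp 1 * (Y ω * Real.exp (-Y ω)) - a * (X ω * Real.exp (-Y ω))) ∂μ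
        = (∫ ω, (a * (({ω | Y ω = 0} ∩ {ω | 0 < X ω}).indicator (1 : Ω → ℝ) ω)
            + Real.exp 1 * (Y ω * Real.exp (-Y ω))) ∂μ)
          - ∫ ω, a * (X ω * Real.exp (-Y ω)) ∂μ := integral_sub (intA.add intB) intC
    have e2 : ∫ ω, (a * (({ω | Y ω = 0} ∩ {ω | 0 < X ω}).indicator (1 : Ω → ℝ) ω)
          + Real.exp 1 * (Y ω * Real.exp (-Y ω))) ∂μ
        = (∫ ω, a * (({ω | Y ω = 0} ∩ {ω | 0 < X ω}).indicator (1 : Ω → ℝ) ω) ∂μ)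
          + ∫ ω, Real.exp 1 * (Y ω * Real.exp (-Y ω)) ∂μ := integral_add intA intB
    rw [e1, e2, integral_const_mul, integral_const_mul, integral_const_mul, int_ind _ mS0]
  have hRval : ∫ ω, (({ω | 0 < X ω}.indicator (1 : Ω → ℝ) ω) *
        Real.exp (-a * X ω / Real.exp 1)) ∂μ
      = ∫ ω in {ω | 0 < X ω}, Real.exp (-a * X ω / Real.exp 1) ∂μ := by
    rw [← integral_indicator mSX]
    refine integral_congr_ae (Filter.Eventually.of_forall fun ω => ?_)
    dsimp only
    by_cases h : ω ∈ {ω | 0 < X ω}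
    · rw [Set.indicator_of_mem h, Set.indicator_of_mem h, Pi.one_apply, one_mul]
    · rw [Set.indicator_of_notMem h, Set.indicator_of_notMem h, zero_mul]
  have main : a * (μ ({ω | Y ω = 0} ∩ {ω | 0 < X ω})).toReal
      ≤ ∫ ω in {ω | 0 < X ω}, Real.exp (-a * X ω / Real.exp 1) ∂μ := by
    rw [hLval, hRval] at hmono
    linarith
  -- final arithmetic
  have h2 : (μ ({ω | Y ω = 0} ∩ {ω | 0 < X ω})).toReal
      ≤ a⁻¹ * ∫ ω in {ω | 0 < X ω}, Real.exp (-a * X ω / Real.exp 1) ∂μ := by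
    calc (μ ({ω | Y ω = 0} ∩ {ω | 0 < X ω})).toReal
        = a⁻¹ * (a * (μ ({ω | Y ω = 0} ∩ {ω | 0 < X ω})).toReal) := by
          field_simp
      _ ≤ a⁻¹ * ∫ ω in {ω | 0 < X ω}, Real.exp (-a * X ω / Real.exp 1) ∂μ :=
          mul_le_mul_of_nonneg_left main (inv_nonneg.mpr ha0.le)
  rw [← mul_div_assoc]
  exact div_le_div_of_nonneg_right h2 hpos.le
end

section
/- In the setting of the large deviation principle above, the averaged inequality E[Y·λ^Y] ≥ a·E[X·λ^{Y+1}] holds for every λ ∈ (0,1), where the inequality P[y_j=1, y_i=0 ∀i∈I] ≥ a·P[x_j=1, y_i=0 ∀i∈I]·1_{j∉I} is multiplied by λ^{n−|I|}(1−λ)^{|I|} and summed over all j ∈ [n] and I ⊆ [n]. -/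
open MeasureTheory Real Finset

private lemma integrable_of_bdd' {Ω : Type*} [MeasurableSpace Ω]
    (μ : Measure Ω) [IsProbabilityMeasure μ] {f : Ω → ℝ} (hf : Measurable f)
    {C : ℝ} (hC : ∀ ω, |f ω| ≤ C) : Integrable f μ :=
  (integrable_const C).mono' hf.aestronglyMeasurable
    (Filter.Eventually.of_forall fun ω => by simpa [Real.norm_eq_abs] using hC ω)

/-- **Averaged inequality in the large deviation principle:** under the
hypotheses `y_i ≤ x_i` a.s. and
`P[y_j = 1, y_i = 0 ∀ i ∈ I] ≥ a ⬝ P[x_j = 1, y_i = 0 ∀ i ∈ I]` for `j ∉ I`,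
one has `E[Y λ^Y] ≥ a E[X λ^{Y+1}]` for every `λ ∈ (0,1)`. -/
theorem averaged_inequality {Ω : Type*} [MeasurableSpace Ω]
    (μ : Measure Ω) [IsProbabilityMeasure μ]
    (n : ℕ) (x y : Ω → Fin n → Bool)
    (hxm : ∀ i, MeasurableSet {ω | x ω i = true})
    (hym : ∀ i, MeasurableSet {ω | y ω i = true})
    (hyx : ∀ᵐ ω ∂μ, ∀ i, y ω i ≤ x ω i)
    (a : ℝ) (ha0 : 0 < a) (ha1 : a ≤ 1)
    (hcond : ∀ (j : Fin n) (I : Finset (Fin n)), j ∉ I →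
      a * (μ ({ω | x ω j = true} ∩ {ω | ∀ i ∈ I, y ω i = false})).toReal ≤
        (μ ({ω | y ω j = true} ∩ {ω | ∀ i ∈ I, y ω i = false})).toReal)
    (X Y : Ω → ℝ)
    (hX : ∀ ω, X ω = ∑ i : Fin n, (if x ω i then (1 : ℝ) else 0))
    (hY : ∀ ω, Y ω = ∑ i : Fin n, (if y ω i then (1 : ℝ) else 0))
    (l : ℝ) (hl0 : 0 < l) (hl1 : l < 1) :
    a * ∫ ω, X ω * l ^ (Y ω + 1) ∂μ ≤ ∫ ω, Y ω * l ^ (Y ω) ∂μ := by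
  classical
  have hl0' : (0:ℝ) ≤ l := hl0.le
  have hl1' : l ≤ 1 := hl1.le
  -- the partial product
  set F : Fin n → Ω → ℝ := fun j ω => ∏ i ∈ Finset.univ.erase j, (if y ω i then l else 1)
    with hFdef
  have hF0 : ∀ j ω, 0 ≤ F j ω := fun j ω =>
    Finset.prod_nonneg fun i _ => by split <;> norm_num [hl0']
  have hF1 : ∀ j ω, F j ω ≤ 1 := fun j ω =>
    Finset.prod_le_one (fun i _ => by split <;> norm_num [hl0']) (fun i _ => by split <;> norm_num [hl1'])
  have hFm : ∀ j, Measurable (F j) := fun j =>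
    Finset.measurable_prod _ fun i _ => Measurable.ite (hym i) measurable_const measurable_const
  -- full product
  have hP : ∀ ω, l ^ (Y ω) = ∏ i : Fin n, (if y ω i then l else 1) := by
    intro ω
    have h1 : Y ω = ((∑ i : Fin n, (if y ω i then 1 else 0) : ℕ) : ℝ) := by
      rw [hY]; push_cast; rfl
    rw [h1, Real.rpow_natCast]
    rw [← Finset.prod_pow_eq_pow_sum]
    exact Finset.prod_congr rfl fun i _ => by split <;> simp
  have hsplit : ∀ j ω, (∏ i : Fin n, (if y ω i then l else 1))
      = (if y ω j then l else 1) * F j ω := fun j ω =>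
    (Finset.mul_prod_erase Finset.univ _ (Finset.mem_univ j)).symm
  -- summand functions
  set gX : Fin n → Ω → ℝ := fun j ω => (if x ω j then (1:ℝ) else 0) * F j ω with hgX
  set gY : Fin n → Ω → ℝ := fun j ω => (if y ω j then (1:ℝ) else 0) * F j ω with hgY
  set h : Fin n → Ω → ℝ :=
    fun j ω => (if x ω j then (1:ℝ) else 0) * ((if y ω j then l else 1) * F j ω) with hh
  have hmeas : ∀ (b : Ω → Fin n → Bool) (hb : ∀ i, MeasurableSet {ω | b ω i = true}) (j : Fin n),
      Measurable fun ω => (if b ω j then (1:ℝ) else 0) :=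
    fun b hb j => Measurable.ite (hb j) measurable_const measurable_const
  have hgXi : ∀ j, Integrable (gX j) μ := by
    intro j
    refine integrable_of_bdd' μ ((hmeas x hxm j).mul (hFm j)) (C := 1) fun ω => ?_
    rw [abs_of_nonneg (mul_nonneg (by positivity) (hF0 j ω))]
    calc (if x ω j then (1:ℝ) else 0) * F j ω ≤ 1 * 1 := by
          apply mul_le_mul (by split <;> norm_num) (hF1 j ω) (hF0 j ω) zero_le_one
      _ = 1 := by ring
  have hgYi : ∀ j, Integrable (gY j) μ := by
    intro j
    refine integrable_of_bdd' μ ((hmeas y hym j).mul (hFm j)) (C := 1) fun ω => ?_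
    rw [abs_of_nonneg (mul_nonneg (by positivity) (hF0 j ω))]
    calc (if y ω j then (1:ℝ) else 0) * F j ω ≤ 1 * 1 := by
          apply mul_le_mul (by split <;> norm_num) (hF1 j ω) (hF0 j ω) zero_le_one
      _ = 1 := by ring
  have hhi : ∀ j, Integrable (h j) μ := by
    intro j
    refine integrable_of_bdd' μ ((hmeas x hxm j).mul
      ((Measurable.ite (hym j) measurable_const measurable_const).mul (hFm j))) (C := 1)
      fun ω => ?_
    have h2 : (0:ℝ) ≤ (if y ω j then l else 1) := by split <;> norm_num [hl0']
    have h3 : (if y ω j then l else 1) ≤ 1 := by split <;> norm_num [hl1']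
    rw [abs_of_nonneg (mul_nonneg (by positivity) (mul_nonneg h2 (hF0 j ω)))]
    calc (if x ω j then (1:ℝ) else 0) * ((if y ω j then l else 1) * F j ω) ≤ 1 * (1 * 1) := by
          apply mul_le_mul (by split <;> norm_num)
            (mul_le_mul h3 (hF1 j ω) (hF0 j ω) zero_le_one)
            (mul_nonneg h2 (hF0 j ω)) zero_le_one
      _ = 1 := by ring
  -- pointwise identities
  have hptY : ∀ ω, Y ω * l ^ (Y ω) = l * ∑ j : Fin n, gY j ω := by
    intro ω
    rw [hP, hY ω, Finset.sum_mul, Finset.mul_sum]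
    refine Finset.sum_congr rfl fun j _ => ?_
    rw [hsplit j ω]
    by_cases hyj : y ω j <;> simp [hgY, hyj] <;> ring
  have hptX : ∀ ω, X ω * l ^ (Y ω + 1) = l * ∑ j : Fin n, h j ω := by
    intro ω
    have : l ^ (Y ω + 1) = l ^ (Y ω) * l := by
      rw [Real.rpow_add hl0, Real.rpow_one]
    rw [this, hP, hX ω, Finset.mul_sum, Finset.sum_mul]
    refine Finset.sum_congr rfl fun j _ => ?_
    rw [hsplit j ω, hh]
    ring
  -- integral identities
  have hIY : ∫ ω, Y ω * l ^ (Y ω) ∂μ = l * ∑ j : Fin n, ∫ ω, gY j ω ∂μ := by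
    rw [show (fun ω => Y ω * l ^ (Y ω)) = fun ω => l * ∑ j : Fin n, gY j ω from funext hptY,
      integral_const_mul, integral_finset_sum _ fun j _ => hgYi j]
  have hIX : ∫ ω, X ω * l ^ (Y ω + 1) ∂μ = l * ∑ j : Fin n, ∫ ω, h j ω ∂μ := by
    rw [show (fun ω => X ω * l ^ (Y ω + 1)) = fun ω => l * ∑ j : Fin n, h j ω from funext hptX,
      integral_const_mul, integral_finset_sum _ fun j _ => hhi j]
  -- h j ≤ gX j pointwise
  have hhg : ∀ j, ∫ ω, h j ω ∂μ ≤ ∫ ω, gX j ω ∂μ := by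
    intro j
    refine integral_mono (hhi j) (hgXi j) fun ω => ?_
    have h2 : (0:ℝ) ≤ (if y ω j then l else 1) := by split <;> norm_num [hl0']
    have h3 : (if y ω j then l else 1) ≤ 1 := by split <;> norm_num [hl1']
    simp only [hh, hgX]
    have hx0 : (0:ℝ) ≤ (if x ω j then (1:ℝ) else 0) := by positivity
    calc (if x ω j then (1:ℝ) else 0) * ((if y ω j then l else 1) * F j ω)
        ≤ (if x ω j then (1:ℝ) else 0) * (1 * F j ω) :=
          mul_le_mul_of_nonneg_left (mul_le_mul_of_nonneg_right h3 (hF0 j ω)) hx0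
      _ = (if x ω j then (1:ℝ) else 0) * F j ω := by ring
  -- key per-coordinate comparison via subset expansion
  have hkey : ∀ j, a * ∫ ω, gX j ω ∂μ ≤ ∫ ω, gY j ω ∂μ := by
    intro j
    set E := Finset.univ.erase j with hE
    have hjE : j ∉ E := Finset.notMem_erase j _
    set coef : Finset (Fin n) → ℝ := fun t => l ^ (E.card - t.card) * (1-l) ^ t.card with hcoef
    have hcoef0 : ∀ t, 0 ≤ coef t := fun t =>
      mul_nonneg (pow_nonneg hl0' _) (pow_nonneg (by linarith) _)
    set S : (Ω → Fin n → Bool) → Finset (Fin n) → Set Ω :=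
      fun b t => {ω | b ω j = true} ∩ {ω | ∀ i ∈ t, y ω i = false} with hS
    have hSm : ∀ (b : Ω → Fin n → Bool), (∀ i, MeasurableSet {ω | b ω i = true}) →
        ∀ t, MeasurableSet (S b t) := by
      intro b hb t
      refine (hb j).inter ?_
      have heq : {ω | ∀ i ∈ t, y ω i = false} = ⋂ i ∈ (t : Set (Fin n)), {ω | y ω i = false} := by
        ext ω; simp
      rw [heq]
      refine MeasurableSet.biInter (Set.to_countable _) fun i _ => ?_
      have : {ω | y ω i = false} = {ω | y ω i = true}ᶜ := by ext ω; simp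
      rw [this]; exact (hym i).compl
    have expand : ∀ (b : Ω → Fin n → Bool) (ω : Ω),
        (if b ω j then (1:ℝ) else 0) * F j ω
          = ∑ t ∈ E.powerset, coef t * (if ω ∈ S b t then 1 else 0) := by
      intro b ω
      have hFe : F j ω = ∑ t ∈ E.powerset,
          coef t * (if (∀ i ∈ t, y ω i = false) then (1:ℝ) else 0) := by
        have h1 : F j ω = ∏ i ∈ E, ((if y ω i then (0:ℝ) else (1-l)) + l) := by
          refine Finset.prod_congr rfl fun i _ => ?_
          split <;> ring
        rw [h1, Finset.prod_add]
        refine Finset.sum_congr rfl fun t ht => ?_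
        rw [Finset.mem_powerset] at ht
        have hc : ∏ _i ∈ E \ t, l = l ^ (E.card - t.card) := by
          rw [Finset.prod_const, Finset.card_sdiff_of_subset ht]
        by_cases hall : ∀ i ∈ t, y ω i = false
        · have h2 : ∏ i ∈ t, (if y ω i then (0:ℝ) else (1-l)) = (1-l) ^ t.card :=
            calc ∏ i ∈ t, (if y ω i then (0:ℝ) else (1-l)) = ∏ _i ∈ t, (1-l) :=
                  Finset.prod_congr rfl fun i hi => by simp [hall i hi]
              _ = (1-l) ^ t.card := Finset.prod_const _
          rw [h2, hc, if_pos hall, hcoef]; ring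
        · obtain ⟨i, hi, hyi⟩ := not_forall₂.mp hall
          have h2 : ∏ i ∈ t, (if y ω i then (0:ℝ) else (1-l)) = 0 := by
            refine Finset.prod_eq_zero hi ?_
            have : y ω i = true := by
              cases hyω : y ω i with
              | false => exact absurd hyω hyi
              | true => rfl
            simp [this]
          rw [h2, if_neg hall]; ring
      rw [hFe, Finset.mul_sum]
      refine Finset.sum_congr rfl fun t ht => ?_
      rw [mul_left_comm]
      congr 1
      by_cases h1 : b ω j = true <;> by_cases h2 : ∀ i ∈ t, y ω i = false <;>
        simp [hS, Set.mem_inter_iff, Set.mem_setOf_eq, h1, h2]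
    have hint : ∀ (b : Ω → Fin n → Bool), (∀ i, MeasurableSet {ω | b ω i = true}) →
        ∫ ω, (if b ω j then (1:ℝ) else 0) * F j ω ∂μ
          = ∑ t ∈ E.powerset, coef t * (μ (S b t)).toReal := by
      intro b hb
      rw [show (fun ω => (if b ω j then (1:ℝ) else 0) * F j ω)
          = fun ω => ∑ t ∈ E.powerset, coef t * (if ω ∈ S b t then 1 else 0)
        from funext (expand b)]
      have hind : ∀ t, (fun ω => if ω ∈ S b t then (1:ℝ) else 0)
          = (S b t).indicator (fun _ => (1:ℝ)) := by
        intro t; ext ω; simp [Set.indicator_apply]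
      rw [integral_finset_sum _ fun t ht => ?_]
      · refine Finset.sum_congr rfl fun t ht => ?_
        rw [integral_const_mul, hind t, integral_indicator_const (1:ℝ) (hSm b hb t),
          smul_eq_mul, mul_one, Measure.real]
      · exact (((integrable_const (1:ℝ)).indicator (hSm b hb t)).congr
          (Filter.Eventually.of_forall fun ω => by simp [Set.indicator_apply])).const_mul _
    have hIgX : ∫ ω, gX j ω ∂μ = ∑ t ∈ E.powerset, coef t * (μ (S x t)).toReal := hint x hxm
    have hIgY : ∫ ω, gY j ω ∂μ = ∑ t ∈ E.powerset, coef t * (μ (S y t)).toReal := hint y hym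
    rw [hIgX, hIgY, Finset.mul_sum]
    refine Finset.sum_le_sum fun t ht => ?_
    have hjt : j ∉ t := fun hjt => hjE (Finset.mem_powerset.mp ht hjt)
    calc a * (coef t * (μ (S x t)).toReal) = coef t * (a * (μ (S x t)).toReal) := by ring
      _ ≤ coef t * (μ (S y t)).toReal :=
          mul_le_mul_of_nonneg_left (hcond j t hjt) (hcoef0 t)
  -- assemble
  rw [hIX, hIY]
  calc a * (l * ∑ j : Fin n, ∫ ω, h j ω ∂μ)
      = l * (a * ∑ j : Fin n, ∫ ω, h j ω ∂μ) := by ring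
    _ = l * ∑ j : Fin n, a * ∫ ω, h j ω ∂μ := by rw [Finset.mul_sum]
    _ ≤ l * ∑ j : Fin n, ∫ ω, gY j ω ∂μ := by
        refine mul_le_mul_of_nonneg_left (Finset.sum_le_sum fun j _ => ?_) hl0'
        exact le_trans (mul_le_mul_of_nonneg_left (hhg j) ha0.le) (hkey j)
end

section
/- Quantitative tail version: under the hypotheses of the large deviation principle (y_i ≤ x_i a.s. and the conditional marginal condition with constant a ∈ (0,1]), for every t ≥ 0 and s > 0: P[Y ≤ t] ≤ P[X < (e/a)(t+s)] + (e^{t−1}/s)·E[e^{−aX/e}]. -/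
open MeasureTheory Real Finset


private lemma self_le_exp' (z : ℝ) : z * Real.exp (1 - z) ≤ 1 := by
  have h2 : z ≤ Real.exp (z-1) := by have := Real.add_one_le_exp (z - 1); linarith
  have h3 := mul_le_mul_of_nonneg_right h2 (Real.exp_nonneg (1 - z))
  rwa [← Real.exp_add, show z - 1 + (1 - z) = 0 by ring, Real.exp_zero] at h3

private lemma exp_sub_one_ge (z : ℝ) : z ≤ Real.exp (z - 1) := by
  have := Real.add_one_le_exp (z - 1); linarith

set_option maxHeartbeats 1000000 in
private lemma cert (a t s Xv Yv : ℝ) (ha0 : 0 < a) (ha1 : a ≤ 1) (ht : 0 ≤ t)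
    (hs : 0 < s) (hY0 : 0 ≤ Yv) (hYX : Yv ≤ Xv) :
    (if Yv ≤ t then (1:ℝ) else 0) ≤
      (if Xv < Real.exp 1 / a * (t + s) then (1:ℝ) else 0)
        + Real.exp (t - 1) / s * Real.exp (-a * Xv / Real.exp 1)
        + Real.exp (-(a * (1 - (Real.exp 1)⁻¹) - 1) * t) / s *
            (Real.exp ((a * (1 - (Real.exp 1)⁻¹) - 1) * Yv) *
              (a * Real.exp (a * (1 - (Real.exp 1)⁻¹) - 1) * (Xv - Yv) - (1 - a) * Yv)) := by
  have he1 : (1:ℝ) < Real.exp 1 := by have := Real.add_one_le_exp 1; linarith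
  have he1p : (0:ℝ) < Real.exp 1 := Real.exp_pos 1
  have hie : (Real.exp 1)⁻¹ < 1 := by rw [inv_lt_one_iff₀]; right; exact he1
  have hie0 : 0 < (Real.exp 1)⁻¹ := by positivity
  set L : ℝ := a * (1 - (Real.exp 1)⁻¹) - 1 with hLdef
  clear_value L
  set W : ℝ := (1 - a) * Yv with hWdef
  clear_value W
  set z : ℝ := a * (Xv - Yv) / Real.exp 1 with hzdef
  clear_value z
  have hv0 : 0 < 1 + L := by
    rw [hLdef]; nlinarith
  have hLneg : L < 0 := by
    rw [hLdef]; nlinarith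
  have hrpos : 0 < Real.exp L := Real.exp_pos L
  have hr1 : Real.exp L < 1 := Real.exp_lt_one_iff.mpr hLneg
  set E : ℝ := Real.exp (1 + L) with hEdef
  clear_value E
  have hE1 : 1 ≤ E := by
    have := Real.add_one_le_exp (1 + L); rw [hEdef]; linarith
  have hE2 : 1 + L + 1 ≤ E := by
    have := Real.add_one_le_exp (1 + L); rw [hEdef]; linarith
  have hEpos : 0 < E := by rw [hEdef]; exact Real.exp_pos _
  have hEeq : E = Real.exp 1 * Real.exp L := by rw [hEdef]; exact Real.exp_add 1 L
  have hLaeY : L * Yv + a * Yv / Real.exp 1 = -W := by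
    have h1 : L * Yv + a * Yv / Real.exp 1 = (L + a / Real.exp 1) * Yv := by ring
    have h2 : L + a / Real.exp 1 = -(1 - a) := by
      rw [hLdef]; field_simp; ring
    rw [h1, h2, hWdef]; ring
  have htL' : 0 ≤ t + t * L := by nlinarith [mul_nonneg ht (le_of_lt hv0)]
  have hz0 : 0 ≤ z := by
    rw [hzdef]
    exact div_nonneg (mul_nonneg ha0.le (by linarith)) he1p.le
  have hXsplit : Real.exp (-a * Xv / Real.exp 1)
      = Real.exp (-a * Yv / Real.exp 1) * Real.exp (-z) := by
    rw [← Real.exp_add]; congr 1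
    rw [hzdef]; field_simp; ring
  have hW0 : 0 ≤ W := by rw [hWdef]; exact mul_nonneg (by linarith) hY0
  -- L1 : the global inequality
  have hL1 : Real.exp (-L * t) / s * (Real.exp (L * Yv) * (W - a * Real.exp L * (Xv - Yv)))
      ≤ Real.exp (t - 1) / s * Real.exp (-a * Xv / Real.exp 1) := by
    set P : ℝ := Real.exp (-L * t) / s * (Real.exp (L * Yv) * (W - a * Real.exp L * (Xv - Yv)))
      with hPdef
    clear_value P
    by_cases hT : W - a * Real.exp L * (Xv - Yv) ≤ 0
    · have h1 : Real.exp (L * Yv) * (W - a * Real.exp L * (Xv - Yv)) ≤ 0 :=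
        mul_nonpos_of_nonneg_of_nonpos (Real.exp_nonneg _) hT
      have h2 : P ≤ 0 := by
        rw [hPdef]
        exact mul_nonpos_of_nonneg_of_nonpos (div_nonneg (Real.exp_nonneg _) hs.le) h1
      have h3 : 0 < Real.exp (t - 1) / s * Real.exp (-a * Xv / Real.exp 1) :=
        mul_pos (div_pos (Real.exp_pos _) hs) (Real.exp_pos _)
      linarith
    · push_neg at hT
      have hrz : a * Real.exp L * (Xv - Yv) = E * z := by
        rw [hEeq, hzdef]; field_simp
      have key : P * Real.exp z ≤ Real.exp (t - 1) / s * Real.exp (-a * Yv / Real.exp 1) := by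
        by_cases hsm : W ≤ E
        · -- subcase (i)
          have step1 : (W - a * Real.exp L * (Xv - Yv)) * Real.exp z ≤ W := by
            have h3 : (1 - z) * Real.exp z ≤ 1 := by
              have h4 : 1 - z ≤ Real.exp (-z) := by have := Real.add_one_le_exp (-z); linarith
              have h5 := mul_le_mul_of_nonneg_right h4 (Real.exp_nonneg z)
              rwa [← Real.exp_add, show -z + z = 0 by ring, Real.exp_zero] at h5
            have h5 : W * z ≤ E * z := mul_le_mul_of_nonneg_right hsm hz0
            calc (W - a * Real.exp L * (Xv - Yv)) * Real.exp z
                ≤ (W - W * z) * Real.exp z := by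
                  apply mul_le_mul_of_nonneg_right _ (Real.exp_nonneg z)
                  rw [hrz]; linarith
              _ = W * ((1 - z) * Real.exp z) := by ring
              _ ≤ W * 1 := mul_le_mul_of_nonneg_left h3 hW0
              _ = W := by ring
          have step2 : Real.exp (-L * t) * (Real.exp (L * Yv) * W)
              ≤ Real.exp (t - 1) * Real.exp (-a * Yv / Real.exp 1) := by
            have hWle : W ≤ Real.exp (W - 1) := exp_sub_one_ge W
            calc Real.exp (-L * t) * (Real.exp (L * Yv) * W)
                ≤ Real.exp (-L * t) * (Real.exp (L * Yv) * Real.exp (W - 1)) := by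
                  apply mul_le_mul_of_nonneg_left _ (Real.exp_nonneg _)
                  exact mul_le_mul_of_nonneg_left hWle (Real.exp_nonneg _)
              _ = Real.exp (-L * t + L * Yv + (W - 1)) := by
                  rw [Real.exp_add, Real.exp_add]; ring
              _ ≤ Real.exp (t - 1 + -a * Yv / Real.exp 1) := by
                  apply Real.exp_le_exp.mpr
                  have hsub : -a * Yv / Real.exp 1 = -(a * Yv / Real.exp 1) := by ring
                  rw [hsub]; linarith [hLaeY, htL']
              _ = Real.exp (t - 1) * Real.exp (-a * Yv / Real.exp 1) := Real.exp_add _ _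
          calc P * Real.exp z
              = Real.exp (-L * t) / s *
                (Real.exp (L * Yv) * ((W - a * Real.exp L * (Xv - Yv)) * Real.exp z)) := by
                rw [hPdef]; ring
            _ ≤ Real.exp (-L * t) / s * (Real.exp (L * Yv) * W) := by
                apply mul_le_mul_of_nonneg_left _ (div_nonneg (Real.exp_nonneg _) hs.le)
                exact mul_le_mul_of_nonneg_left step1 (Real.exp_nonneg _)
            _ = Real.exp (-L * t) * (Real.exp (L * Yv) * W) / s := by ring
            _ ≤ Real.exp (t - 1) * Real.exp (-a * Yv / Real.exp 1) / s :=
                div_le_div_of_nonneg_right step2 hs.le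
            _ = Real.exp (t - 1) / s * Real.exp (-a * Yv / Real.exp 1) := by ring
        · -- subcase (ii)
          push_neg at hsm
          set D : ℝ := W / E with hDdef
          clear_value D
          have hWD : W = E * D := by
            rw [hDdef]; field_simp
          have hD1 : 1 ≤ D := by
            rw [hDdef, le_div_iff₀ hEpos]; linarith
          set z' : ℝ := D - z with hz'def
          clear_value z'
          have hcore : W - a * Real.exp L * (Xv - Yv) = E * z' := by
            rw [hrz, hz'def, hWD]; ring
          have step1 : (W - a * Real.exp L * (Xv - Yv)) * Real.exp z
              ≤ E * Real.exp (D - 1) := by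
            have hze : Real.exp z = Real.exp (D - 1) * Real.exp (1 - z') := by
              rw [← Real.exp_add]; congr 1; rw [hz'def]; ring
            calc (W - a * Real.exp L * (Xv - Yv)) * Real.exp z
                = E * Real.exp (D - 1) * (z' * Real.exp (1 - z')) := by
                  rw [hcore, hze]; ring
              _ ≤ E * Real.exp (D - 1) * 1 := by
                  apply mul_le_mul_of_nonneg_left (self_le_exp' z')
                  exact mul_nonneg hEpos.le (Real.exp_nonneg _)
              _ = E * Real.exp (D - 1) := by ring
          have step2 : Real.exp (-L * t) * (Real.exp (L * Yv) * (E * Real.exp (D - 1)))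
              ≤ Real.exp (t - 1) * Real.exp (-a * Yv / Real.exp 1) := by
            have hDW : D - W ≤ 1 - E := by
              nlinarith [mul_nonneg (sub_nonneg.mpr hE1) (sub_nonneg.mpr hD1), hWD]
            calc Real.exp (-L * t) * (Real.exp (L * Yv) * (E * Real.exp (D - 1)))
                = Real.exp (-L * t + L * Yv + (1 + L) + (D - 1)) := by
                  rw [Real.exp_add, Real.exp_add, Real.exp_add, hEdef]; ring
              _ ≤ Real.exp (t - 1 + -a * Yv / Real.exp 1) := by
                  apply Real.exp_le_exp.mpr
                  have hsub : -a * Yv / Real.exp 1 = -(a * Yv / Real.exp 1) := by ring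
                  rw [hsub]; linarith [hLaeY, htL', hDW, hE2]
              _ = Real.exp (t - 1) * Real.exp (-a * Yv / Real.exp 1) := Real.exp_add _ _
          calc P * Real.exp z
              = Real.exp (-L * t) / s *
                (Real.exp (L * Yv) * ((W - a * Real.exp L * (Xv - Yv)) * Real.exp z)) := by
                rw [hPdef]; ring
            _ ≤ Real.exp (-L * t) / s * (Real.exp (L * Yv) * (E * Real.exp (D - 1))) := by
                apply mul_le_mul_of_nonneg_left _ (div_nonneg (Real.exp_nonneg _) hs.le)
                exact mul_le_mul_of_nonneg_left step1 (Real.exp_nonneg _)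
            _ = Real.exp (-L * t) * (Real.exp (L * Yv) * (E * Real.exp (D - 1))) / s := by ring
            _ ≤ Real.exp (t - 1) * Real.exp (-a * Yv / Real.exp 1) / s :=
                div_le_div_of_nonneg_right step2 hs.le
            _ = Real.exp (t - 1) / s * Real.exp (-a * Yv / Real.exp 1) := by ring
      -- conclude L1 from key
      have hfin : P = P * Real.exp z * Real.exp (-z) := by
        rw [mul_assoc, ← Real.exp_add, show z + -z = 0 by ring, Real.exp_zero, mul_one]
      rw [hXsplit, hfin, ← mul_assoc]
      exact mul_le_mul_of_nonneg_right key (Real.exp_nonneg _)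
  -- now the case analysis
  by_cases hXM : Xv < Real.exp 1 / a * (t + s)
  · simp only [if_pos hXM]
    have h1 : (if Yv ≤ t then (1:ℝ) else 0) ≤ 1 := by split <;> norm_num
    have h2 : -(Real.exp (t - 1) / s * Real.exp (-a * Xv / Real.exp 1)) ≤
        Real.exp (-L * t) / s *
          (Real.exp (L * Yv) * (a * Real.exp L * (Xv - Yv) - W)) := by
      have heq : Real.exp (-L * t) / s * (Real.exp (L * Yv) * (a * Real.exp L * (Xv - Yv) - W))
          = -(Real.exp (-L * t) / s *
              (Real.exp (L * Yv) * (W - a * Real.exp L * (Xv - Yv)))) := by ring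
      rw [heq]
      exact neg_le_neg hL1
    linarith
  · simp only [if_neg hXM]
    push_neg at hXM
    by_cases hYt : Yv ≤ t
    · simp only [if_pos hYt]
      have harX : t + s ≤ a * Real.exp L * Xv := by
        have h1 : a * Real.exp L * (Real.exp 1 / a * (t + s)) = E * (t + s) := by
          rw [hEeq]; field_simp
        have h2 : a * Real.exp L * (Real.exp 1 / a * (t + s)) ≤ a * Real.exp L * Xv :=
          mul_le_mul_of_nonneg_left hXM (mul_nonneg ha0.le hrpos.le)
        have h3 : t + s ≤ E * (t + s) := le_mul_of_one_le_left (by linarith) hE1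
        linarith
      have hbr : s ≤ a * Real.exp L * (Xv - Yv) - W := by
        have h4 : a * Real.exp L * Yv ≤ a * Yv := by
          nlinarith [mul_nonneg (mul_nonneg ha0.le hY0) (sub_nonneg.mpr hr1.le)]
        have hexp1 : a * Real.exp L * (Xv - Yv)
            = a * Real.exp L * Xv - a * Real.exp L * Yv := by ring
        have hW2 : W = Yv - a * Yv := by rw [hWdef]; ring
        linarith
      have hexpY : Real.exp (L * t) ≤ Real.exp (L * Yv) := by
        apply Real.exp_le_exp.mpr
        exact mul_le_mul_of_nonpos_left hYt (le_of_lt hLneg)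
      have hslack : 1 ≤ Real.exp (-L * t) / s *
          (Real.exp (L * Yv) * (a * Real.exp L * (Xv - Yv) - W)) := by
        have h5 : Real.exp (L * t) * s ≤
            Real.exp (L * Yv) * (a * Real.exp L * (Xv - Yv) - W) :=
          mul_le_mul hexpY hbr (le_of_lt hs) (Real.exp_nonneg _)
        have hprod : Real.exp (-L * t) * Real.exp (L * t) = 1 := by
          rw [← Real.exp_add, show -L * t + L * t = 0 by ring, Real.exp_zero]
        have h6 : Real.exp (-L * t) / s * (Real.exp (L * t) * s) = 1 := by
          have hr : Real.exp (-L * t) / s * (Real.exp (L * t) * s)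
              = (Real.exp (-L * t) * Real.exp (L * t)) * (s⁻¹ * s) := by ring
          rw [hr, hprod, inv_mul_cancel₀ hs.ne', mul_one]
        calc (1:ℝ) = Real.exp (-L * t) / s * (Real.exp (L * t) * s) := h6.symm
          _ ≤ _ := mul_le_mul_of_nonneg_left h5 (div_nonneg (Real.exp_nonneg _) hs.le)
      have hce : 0 ≤ Real.exp (t - 1) / s * Real.exp (-a * Xv / Real.exp 1) :=
        mul_nonneg (div_nonneg (Real.exp_nonneg _) hs.le) (Real.exp_nonneg _)
      linarith
    · simp only [if_neg hYt]
      have h2 : -(Real.exp (t - 1) / s * Real.exp (-a * Xv / Real.exp 1)) ≤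
          Real.exp (-L * t) / s *
            (Real.exp (L * Yv) * (a * Real.exp L * (Xv - Yv) - W)) := by
        have heq : Real.exp (-L * t) / s * (Real.exp (L * Yv) * (a * Real.exp L * (Xv - Yv) - W))
            = -(Real.exp (-L * t) / s *
                (Real.exp (L * Yv) * (W - a * Real.exp L * (Xv - Yv)))) := by ring
        rw [heq]
        exact neg_le_neg hL1
      linarith


private lemma prod_bool_ite {n : ℕ} (b : Fin n → Bool) (I : Finset (Fin n)) :
    (∏ i ∈ I, (if b i then (0:ℝ) else 1)) = if (∀ i ∈ I, b i = false) then 1 else 0 := by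
  by_cases h : ∀ i ∈ I, b i = false
  · rw [if_pos h]
    apply Finset.prod_eq_one
    intro i hi; rw [h i hi]; simp
  · rw [if_neg h]
    push_neg at h
    obtain ⟨i, hi, hbi⟩ := h
    apply Finset.prod_eq_zero hi
    have hbi' : b i = true := by revert hbi; cases b i <;> simp
    simp [hbi']

private lemma powerset_sum_ite {n : ℕ} (b : Fin n → Bool) (r : ℝ) (s : Finset (Fin n)) :
    ∑ I ∈ s.powerset, (1-r)^I.card * r^(s.card - I.card) *
        (if (∀ i ∈ I, b i = false) then (1:ℝ) else 0)
      = ∏ i ∈ s, (if b i then r else 1) := by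
  calc ∑ I ∈ s.powerset, (1-r)^I.card * r^(s.card - I.card) *
          (if (∀ i ∈ I, b i = false) then (1:ℝ) else 0)
      = ∑ I ∈ s.powerset,
          (∏ i ∈ I, ((1-r) * (if b i then (0:ℝ) else 1))) * ∏ _i ∈ s \ I, r := by
        apply Finset.sum_congr rfl
        intro I hI
        rw [Finset.mem_powerset] at hI
        rw [Finset.prod_mul_distrib, Finset.prod_const, Finset.prod_const,
          Finset.card_sdiff_of_subset hI, prod_bool_ite]
        ring
    _ = ∏ i ∈ s, ((1-r) * (if b i then (0:ℝ) else 1) + r) := (Finset.prod_add _ _ s).symm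
    _ = ∏ i ∈ s, (if b i then r else 1) := by
        apply Finset.prod_congr rfl
        intro i _
        by_cases hb : b i = true <;> simp [hb] <;> ring

private lemma pointwise_key {n : ℕ} (bx bY : Fin n → Bool) (hle : ∀ i, bY i ≤ bx i)
    (a r : ℝ) :
    ∑ j : Fin n, ∑ I ∈ (Finset.univ.erase j).powerset,
        (1-r)^I.card * r^(n - I.card) *
          (if (∀ i ∈ I, bY i = false) then (1:ℝ) else 0) *
          ((if bY j then (1:ℝ) else 0) - a * (if bx j then (1:ℝ) else 0))
      = (∏ i, (if bY i then r else 1)) *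
          ((1 - a) * (∑ i, (if bY i then (1:ℝ) else 0))
            - a * r * ((∑ i, (if bx i then (1:ℝ) else 0))
                - ∑ i, (if bY i then (1:ℝ) else 0))) := by
  have key1 : ∀ j : Fin n,
      ∑ I ∈ (Finset.univ.erase j).powerset,
        (1-r)^I.card * r^(n - I.card) *
          (if (∀ i ∈ I, bY i = false) then (1:ℝ) else 0)
      = (∏ i ∈ Finset.univ.erase j, (if bY i then r else 1)) * r := by
    intro j
    have hcard : (Finset.univ.erase j).card = n - 1 := by
      rw [Finset.card_erase_of_mem (Finset.mem_univ j), Finset.card_univ, Fintype.card_fin]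
    have hn1 : 1 ≤ n := j.pos
    calc ∑ I ∈ (Finset.univ.erase j).powerset,
          (1-r)^I.card * r^(n - I.card) *
            (if (∀ i ∈ I, bY i = false) then (1:ℝ) else 0)
        = ∑ I ∈ (Finset.univ.erase j).powerset,
            ((1-r)^I.card * r^((Finset.univ.erase j).card - I.card) *
              (if (∀ i ∈ I, bY i = false) then (1:ℝ) else 0)) * r := by
          apply Finset.sum_congr rfl
          intro I hI
          rw [Finset.mem_powerset] at hI
          have hIc : I.card ≤ n - 1 := hcard ▸ Finset.card_le_card hI
          have hpow : n - I.card = ((n-1) - I.card) + 1 := by omega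
          rw [hcard, hpow, pow_succ]
          ring
      _ = (∑ I ∈ (Finset.univ.erase j).powerset,
            (1-r)^I.card * r^((Finset.univ.erase j).card - I.card) *
              (if (∀ i ∈ I, bY i = false) then (1:ℝ) else 0)) * r := by
          rw [Finset.sum_mul]
      _ = (∏ i ∈ Finset.univ.erase j, (if bY i then r else 1)) * r := by
          rw [powerset_sum_ite]
  calc ∑ j : Fin n, ∑ I ∈ (Finset.univ.erase j).powerset,
        (1-r)^I.card * r^(n - I.card) *
          (if (∀ i ∈ I, bY i = false) then (1:ℝ) else 0) *
          ((if bY j then (1:ℝ) else 0) - a * (if bx j then (1:ℝ) else 0))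
      = ∑ j : Fin n, ((∏ i ∈ Finset.univ.erase j, (if bY i then r else 1)) * r) *
          ((if bY j then (1:ℝ) else 0) - a * (if bx j then (1:ℝ) else 0)) := by
        apply Finset.sum_congr rfl
        intro j _
        rw [← Finset.sum_mul, key1 j]
    _ = ∑ j : Fin n, (∏ i, (if bY i then r else 1)) *
          ((1 - a) * (if bY j then (1:ℝ) else 0)
            - a * r * ((if bx j then (1:ℝ) else 0) - (if bY j then (1:ℝ) else 0))) := by
        apply Finset.sum_congr rfl
        intro j _
        have hsplit : (∏ i, (if bY i then r else 1))
            = (if bY j then r else 1) * ∏ i ∈ Finset.univ.erase j, (if bY i then r else 1) :=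
          (Finset.mul_prod_erase _ _ (Finset.mem_univ j)).symm
        by_cases hy : bY j = true
        · have hx : bx j = true := by
            have h := hle j
            cases hbx : bx j
            · rw [hy, hbx] at h; exact absurd h (by decide)
            · rfl
          rw [hsplit]
          simp only [hy, hx, if_pos]
          ring
        · have hy' : bY j = false := by revert hy; cases bY j <;> simp
          rw [hsplit]
          simp only [hy']
          simp only [Bool.false_eq_true, if_false]
          ring
    _ = (∏ i, (if bY i then r else 1)) *
          ∑ j : Fin n, ((1 - a) * (if bY j then (1:ℝ) else 0)
            - a * r * ((if bx j then (1:ℝ) else 0) - (if bY j then (1:ℝ) else 0))) := by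
        rw [Finset.mul_sum]
    _ = (∏ i, (if bY i then r else 1)) *
          ((1 - a) * (∑ i, (if bY i then (1:ℝ) else 0))
            - a * r * ((∑ i, (if bx i then (1:ℝ) else 0))
                - ∑ i, (if bY i then (1:ℝ) else 0))) := by
        congr 1
        rw [Finset.sum_sub_distrib, ← Finset.mul_sum, ← Finset.mul_sum,
          Finset.sum_sub_distrib]

private lemma ite_and_one (P Q : Prop) [Decidable P] [Decidable Q] :
    (if (P ∧ Q) then (1:ℝ) else 0) = (if P then 1 else 0) * (if Q then 1 else 0) := by
  by_cases hP : P <;> by_cases hQ : Q <;> simp [hP, hQ]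

set_option maxHeartbeats 1000000

/-- **Quantitative tail version of the large deviation principle:** under the
hypotheses `y_i ≤ x_i` a.s. and
`P[y_j = 1, y_i = 0 ∀ i ∈ I] ≥ a ⬝ P[x_j = 1, y_i = 0 ∀ i ∈ I]` for `j ∉ I`,
for every `t ≥ 0` and `s > 0`:
`P[Y ≤ t] ≤ P[X < (e/a)(t+s)] + (e^{t−1}/s) E[e^{−aX/e}]`. -/
theorem tail_inequality {Ω : Type*} [MeasurableSpace Ω]
    (μ : Measure Ω) [IsProbabilityMeasure μ]
    (n : ℕ) (x y : Ω → Fin n → Bool)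
    (hxm : ∀ i, MeasurableSet {ω | x ω i = true})
    (hym : ∀ i, MeasurableSet {ω | y ω i = true})
    (hyx : ∀ᵐ ω ∂μ, ∀ i, y ω i ≤ x ω i)
    (a : ℝ) (ha0 : 0 < a) (ha1 : a ≤ 1)
    (hcond : ∀ (j : Fin n) (I : Finset (Fin n)), j ∉ I →
      a * (μ ({ω | x ω j = true} ∩ {ω | ∀ i ∈ I, y ω i = false})).toReal ≤
        (μ ({ω | y ω j = true} ∩ {ω | ∀ i ∈ I, y ω i = false})).toReal)
    (X Y : Ω → ℝ)
    (hX : ∀ ω, X ω = ∑ i : Fin n, (if x ω i then (1 : ℝ) else 0))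
    (hY : ∀ ω, Y ω = ∑ i : Fin n, (if y ω i then (1 : ℝ) else 0))
    (t s : ℝ) (ht : 0 ≤ t) (hs : 0 < s) :
    (μ {ω | Y ω ≤ t}).toReal
      ≤ (μ {ω | X ω < (exp 1 / a) * (t + s)}).toReal
        + (exp (t - 1) / s) * ∫ ω, exp (-a * X ω / exp 1) ∂μ := by
  classical
  have he1 : (1:ℝ) < Real.exp 1 := by have := Real.add_one_le_exp 1; linarith
  set L : ℝ := a * (1 - (Real.exp 1)⁻¹) - 1 with hLdef
  have hLneg : L < 0 := by
    have h1 : (Real.exp 1)⁻¹ < 1 := by rw [inv_lt_one_iff₀]; right; exact he1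
    have h2 : 0 < (Real.exp 1)⁻¹ := by positivity
    rw [hLdef]; nlinarith
  have hrpos : 0 < Real.exp L := Real.exp_pos L
  have hr1 : Real.exp L < 1 := Real.exp_lt_one_iff.mpr hLneg
  -- basic measurability
  have hmYi : ∀ i, Measurable (fun ω => if y ω i then (1:ℝ) else 0) := fun i =>
    Measurable.ite (hym i) measurable_const measurable_const
  have hmXi : ∀ i, Measurable (fun ω => if x ω i then (1:ℝ) else 0) := fun i =>
    Measurable.ite (hxm i) measurable_const measurable_const
  have hYfun : Y = fun ω => ∑ i, if y ω i then (1:ℝ) else 0 := funext hY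
  have hXfun : X = fun ω => ∑ i, if x ω i then (1:ℝ) else 0 := funext hX
  have hmY : Measurable Y := by
    rw [hYfun]; exact Finset.measurable_sum _ (fun i _ => hmYi i)
  have hmX : Measurable X := by
    rw [hXfun]; exact Finset.measurable_sum _ (fun i _ => hmXi i)
  have hY0 : ∀ ω, 0 ≤ Y ω := by
    intro ω; rw [hY ω]
    exact Finset.sum_nonneg (fun i _ => by split <;> norm_num)
  have hX0 : ∀ ω, 0 ≤ X ω := by
    intro ω; rw [hX ω]
    exact Finset.sum_nonneg (fun i _ => by split <;> norm_num)
  have hYb : ∀ ω, Y ω ≤ n := by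
    intro ω; rw [hY ω]
    calc ∑ i : Fin n, (if y ω i then (1:ℝ) else 0) ≤ ∑ _i : Fin n, (1:ℝ) :=
        Finset.sum_le_sum (fun i _ => by split <;> norm_num)
      _ = n := by simp
  have hXb : ∀ ω, X ω ≤ n := by
    intro ω; rw [hX ω]
    calc ∑ i : Fin n, (if x ω i then (1:ℝ) else 0) ≤ ∑ _i : Fin n, (1:ℝ) :=
        Finset.sum_le_sum (fun i _ => by split <;> norm_num)
      _ = n := by simp
  -- bounded measurable functions are integrable
  have hbdd_int : ∀ (f : Ω → ℝ) (C : ℝ), Measurable f → (∀ ω, |f ω| ≤ C) → Integrable f μ := by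
    intro f C hm hb
    exact (integrable_const C).mono' hm.aestronglyMeasurable
      (Filter.Eventually.of_forall (by simpa [Real.norm_eq_abs] using hb))
  -- Z sets measurable
  have hZm : ∀ I : Finset (Fin n), MeasurableSet {ω | ∀ i ∈ I, y ω i = false} := by
    intro I
    have heq : {ω | ∀ i ∈ I, y ω i = false} = ⋂ i ∈ I, {ω | y ω i = false} := by
      ext ω; simp
    rw [heq]
    apply MeasurableSet.biInter (Set.to_countable _)
    intro i _
    have heq2 : {ω | y ω i = false} = {ω | y ω i = true}ᶜ := by
      ext ω; simp
    rw [heq2]; exact (hym i).compl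
  -- Φ
  set Φ : Ω → ℝ := fun ω => ∏ i, (if y ω i then Real.exp L else 1) with hΦdef
  have hmΦ : Measurable Φ :=
    Finset.measurable_prod _ (fun i _ => Measurable.ite (hym i) measurable_const measurable_const)
  have hΦ0 : ∀ ω, 0 ≤ Φ ω := fun ω =>
    Finset.prod_nonneg (fun i _ => by split <;> positivity)
  have hΦ1 : ∀ ω, Φ ω ≤ 1 := fun ω =>
    Finset.prod_le_one (fun i _ => by split <;> positivity)
      (fun i _ => by split <;> [exact hr1.le; norm_num])
  have hΦexp : ∀ ω, Φ ω = Real.exp (L * Y ω) := by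
    intro ω
    have h1 : Real.exp (L * Y ω) = ∏ i, Real.exp (L * (if y ω i then (1:ℝ) else 0)) := by
      rw [hY ω, Finset.mul_sum, Real.exp_sum]
    rw [h1, hΦdef]
    apply Finset.prod_congr rfl
    intro i _
    by_cases hb : y ω i = true <;> simp [hb]
  -- step 3 : the key expectation inequality from hcond
  have step3 : 0 ≤ ∫ ω, Φ ω * ((1-a) * Y ω - a * Real.exp L * (X ω - Y ω)) ∂μ := by
    set g : Fin n → Finset (Fin n) → Ω → ℝ := fun j I ω =>
      (1 - Real.exp L)^I.card * (Real.exp L)^(n - I.card) *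
        (if (∀ i ∈ I, y ω i = false) then (1:ℝ) else 0) *
        ((if y ω j then (1:ℝ) else 0) - a * (if x ω j then (1:ℝ) else 0)) with hgdef
    have hw0 : ∀ I : Finset (Fin n), 0 ≤ (1 - Real.exp L)^I.card * (Real.exp L)^(n - I.card) :=
      fun I => mul_nonneg (pow_nonneg (by linarith) _) (pow_nonneg hrpos.le _)
    have hw1 : ∀ I : Finset (Fin n), (1 - Real.exp L)^I.card * (Real.exp L)^(n - I.card) ≤ 1 := by
      intro I
      have h1 : (1 - Real.exp L)^I.card ≤ 1 := pow_le_one₀ (by linarith) (by linarith)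
      have h2 : (Real.exp L)^(n - I.card) ≤ 1 := pow_le_one₀ hrpos.le hr1.le
      nlinarith [pow_nonneg (show (0:ℝ) ≤ 1 - Real.exp L by linarith) I.card]
    have hgm : ∀ j I, Measurable (g j I) := by
      intro j I
      apply Measurable.mul
      · exact (measurable_const.mul (Measurable.ite (hZm I) measurable_const measurable_const))
      · exact (hmYi j).sub (measurable_const.mul (hmXi j))
    have hgb : ∀ j I ω, |g j I ω| ≤ 1 + a := by
      intro j I ω
      rw [hgdef]
      have h1 : |(if (∀ i ∈ I, y ω i = false) then (1:ℝ) else 0)| ≤ 1 := by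
        split <;> norm_num
      have h2 : |(if y ω j then (1:ℝ) else 0) - a * (if x ω j then (1:ℝ) else 0)| ≤ 1 + a := by
        have ha : |(if y ω j then (1:ℝ) else 0)| ≤ 1 := by split <;> norm_num
        have hb : |a * (if x ω j then (1:ℝ) else 0)| ≤ a := by
          rw [abs_mul, abs_of_pos ha0]
          have : |(if x ω j then (1:ℝ) else 0)| ≤ 1 := by split <;> norm_num
          nlinarith
        calc |(if y ω j then (1:ℝ) else 0) - a * (if x ω j then (1:ℝ) else 0)|
            ≤ |(if y ω j then (1:ℝ) else 0)| + |a * (if x ω j then (1:ℝ) else 0)| :=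
              abs_sub _ _
          _ ≤ 1 + a := by linarith
      calc |(1 - Real.exp L)^I.card * (Real.exp L)^(n - I.card) *
              (if (∀ i ∈ I, y ω i = false) then (1:ℝ) else 0) *
              ((if y ω j then (1:ℝ) else 0) - a * (if x ω j then (1:ℝ) else 0))|
          = |(1 - Real.exp L)^I.card * (Real.exp L)^(n - I.card)| *
              |(if (∀ i ∈ I, y ω i = false) then (1:ℝ) else 0)| *
              |(if y ω j then (1:ℝ) else 0) - a * (if x ω j then (1:ℝ) else 0)| := by
            rw [abs_mul, abs_mul]
        _ ≤ 1 * 1 * (1 + a) := by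
            apply mul_le_mul _ h2 (abs_nonneg _) (by norm_num)
            have := abs_of_nonneg (hw0 I)
            nlinarith [hw1 I, abs_nonneg ((if (∀ i ∈ I, y ω i = false) then (1:ℝ) else 0))]
        _ = 1 + a := by ring
    have hgint : ∀ j I, Integrable (g j I) μ := fun j I =>
      hbdd_int (g j I) (1 + a) (hgm j I) (hgb j I)
    have hgpos : ∀ j (I : Finset (Fin n)), j ∉ I → 0 ≤ ∫ ω, g j I ω ∂μ := by
      intro j I hj
      have hsetY : MeasurableSet ({ω | y ω j = true} ∩ {ω | ∀ i ∈ I, y ω i = false}) :=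
        (hym j).inter (hZm I)
      have hsetX : MeasurableSet ({ω | x ω j = true} ∩ {ω | ∀ i ∈ I, y ω i = false}) :=
        (hxm j).inter (hZm I)
      have hptw : ∀ ω, g j I ω = (1 - Real.exp L)^I.card * (Real.exp L)^(n - I.card) *
          (Set.indicator ({ω | y ω j = true} ∩ {ω | ∀ i ∈ I, y ω i = false}) (fun _ => (1:ℝ)) ω
            - a * Set.indicator ({ω | x ω j = true} ∩ {ω | ∀ i ∈ I, y ω i = false})
                (fun _ => (1:ℝ)) ω) := by
        intro ω
        rw [hgdef]
        simp only [Set.indicator_apply, Set.mem_inter_iff, Set.mem_setOf_eq, ite_and_one]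
        ring
      have hiY : Integrable (Set.indicator ({ω | y ω j = true} ∩ {ω | ∀ i ∈ I, y ω i = false})
          (fun _ => (1:ℝ))) μ := (integrable_const (1:ℝ)).indicator hsetY
      have hiX : Integrable (Set.indicator ({ω | x ω j = true} ∩ {ω | ∀ i ∈ I, y ω i = false})
          (fun _ => (1:ℝ))) μ := (integrable_const (1:ℝ)).indicator hsetX
      have hint : ∫ ω, g j I ω ∂μ = (1 - Real.exp L)^I.card * (Real.exp L)^(n - I.card) *
          ((μ ({ω | y ω j = true} ∩ {ω | ∀ i ∈ I, y ω i = false})).toReal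
            - a * (μ ({ω | x ω j = true} ∩ {ω | ∀ i ∈ I, y ω i = false})).toReal) := by
        rw [integral_congr_ae (Filter.Eventually.of_forall hptw)]
        rw [integral_const_mul]
        congr 1
        rw [integral_sub hiY (hiX.const_mul a), integral_const_mul,
          integral_indicator_const (1:ℝ) hsetY, integral_indicator_const (1:ℝ) hsetX]
        simp; rfl
      rw [hint]
      apply mul_nonneg (hw0 I)
      have := hcond j I hj
      linarith
    calc (0:ℝ) ≤ ∑ j : Fin n, ∑ I ∈ (Finset.univ.erase j).powerset, ∫ ω, g j I ω ∂μ := by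
          apply Finset.sum_nonneg; intro j _
          apply Finset.sum_nonneg; intro I hI
          apply hgpos j I
          intro hjI
          exact (Finset.mem_erase.mp ((Finset.mem_powerset.mp hI) hjI)).1 rfl
      _ = ∑ j : Fin n, ∫ ω, ∑ I ∈ (Finset.univ.erase j).powerset, g j I ω ∂μ := by
          apply Finset.sum_congr rfl; intro j _
          exact (integral_finset_sum _ (fun I _ => hgint j I)).symm
      _ = ∫ ω, ∑ j : Fin n, ∑ I ∈ (Finset.univ.erase j).powerset, g j I ω ∂μ :=
          (integral_finset_sum _ (fun j _ =>
            integrable_finset_sum _ (fun I _ => hgint j I))).symm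
      _ = ∫ ω, Φ ω * ((1-a) * Y ω - a * Real.exp L * (X ω - Y ω)) ∂μ := by
          apply integral_congr_ae
          filter_upwards [hyx] with ω hω
          have hkey := pointwise_key (x ω) (y ω) hω a (Real.exp L)
          simp only [hgdef]
          rw [hkey]
          simp only [hΦdef]
          rw [hY ω, hX ω]
  -- the certificate, pointwise a.e.
  have hae : ∀ᵐ ω ∂μ, (if Y ω ≤ t then (1:ℝ) else 0) ≤
      (if X ω < Real.exp 1 / a * (t + s) then (1:ℝ) else 0)
        + Real.exp (t - 1) / s * Real.exp (-a * X ω / Real.exp 1)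
        + Real.exp (-L * t) / s *
            (Φ ω * (a * Real.exp L * (X ω - Y ω) - (1 - a) * Y ω)) := by
    filter_upwards [hyx] with ω hω
    have hYX : Y ω ≤ X ω := by
      rw [hY ω, hX ω]
      apply Finset.sum_le_sum
      intro i _
      have h := hω i
      cases hby : y ω i
      · simp [hby]; split <;> norm_num
      · have hbx : x ω i = true := by
          rw [hby] at h
          cases hbx2 : x ω i
          · rw [hbx2] at h; exact absurd h (by decide)
          · rfl
        simp [hby, hbx]
    have hc := cert a t s (X ω) (Y ω) ha0 ha1 ht hs (hY0 ω) hYX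
    rw [← hLdef] at hc
    rw [← hΦexp ω] at hc
    exact hc
  -- integrability of all the pieces
  have hmsetYt : MeasurableSet {ω | Y ω ≤ t} := hmY measurableSet_Iic
  have hmsetXM : MeasurableSet {ω | X ω < Real.exp 1 / a * (t + s)} := hmX measurableSet_Iio
  have hf1 : Integrable (fun ω => if Y ω ≤ t then (1:ℝ) else 0) μ :=
    hbdd_int _ 1 (Measurable.ite hmsetYt measurable_const measurable_const)
      (fun ω => by split <;> norm_num)
  have hf2 : Integrable (fun ω => if X ω < Real.exp 1 / a * (t + s) then (1:ℝ) else 0) μ :=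
    hbdd_int _ 1 (Measurable.ite hmsetXM measurable_const measurable_const)
      (fun ω => by split <;> norm_num)
  have hf3im : Measurable (fun ω => Real.exp (-a * X ω / Real.exp 1)) := by
    apply Real.measurable_exp.comp
    exact (hmX.const_mul (-a)).div_const _
  have hf3i : Integrable (fun ω => Real.exp (-a * X ω / Real.exp 1)) μ := by
    apply hbdd_int _ 1 hf3im
    intro ω
    rw [abs_of_pos (Real.exp_pos _)]
    have h1 : 0 ≤ a * X ω := mul_nonneg ha0.le (hX0 ω)
    have h3 : 0 ≤ a * X ω / Real.exp 1 := div_nonneg h1 (Real.exp_nonneg 1)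
    calc Real.exp (-a * X ω / Real.exp 1) ≤ Real.exp 0 := by
          apply Real.exp_le_exp.mpr
          have h2 : -a * X ω / Real.exp 1 = -(a * X ω / Real.exp 1) := by ring
          rw [h2]; linarith
      _ = 1 := Real.exp_zero
  have hf3 : Integrable (fun ω => Real.exp (t - 1) / s * Real.exp (-a * X ω / Real.exp 1)) μ :=
    hf3i.const_mul _
  have hf4 : Integrable (fun ω => Real.exp (-L * t) / s *
      (Φ ω * (a * Real.exp L * (X ω - Y ω) - (1 - a) * Y ω))) μ := by
    apply hbdd_int _ (Real.exp (-L * t) / s * (3 * n))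
    · exact measurable_const.mul (hmΦ.mul (((measurable_const.mul (hmX.sub hmY))).sub
        (measurable_const.mul hmY)))
    · intro ω
      rw [abs_mul, abs_mul]
      have hc0 : |Real.exp (-L * t) / s| = Real.exp (-L * t) / s :=
        abs_of_nonneg (div_nonneg (Real.exp_nonneg _) hs.le)
      rw [hc0]
      apply mul_le_mul_of_nonneg_left _ (div_nonneg (Real.exp_nonneg _) hs.le)
      have hΦa : |Φ ω| ≤ 1 := by rw [abs_of_nonneg (hΦ0 ω)]; exact hΦ1 ω
      have hbr : |a * Real.exp L * (X ω - Y ω) - (1 - a) * Y ω| ≤ 3 * n := by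
        have h1 : |a * Real.exp L * (X ω - Y ω)| ≤ 2 * n := by
          rw [abs_mul]
          have h2 : |a * Real.exp L| ≤ 1 := by
            rw [abs_of_nonneg (mul_nonneg ha0.le hrpos.le)]
            nlinarith
          have h3 : |X ω - Y ω| ≤ 2 * n := by
            rw [abs_le]
            constructor <;> nlinarith [hX0 ω, hY0 ω, hXb ω, hYb ω]
          nlinarith [abs_nonneg (X ω - Y ω)]
        have h4 : |(1 - a) * Y ω| ≤ n := by
          rw [abs_mul, abs_of_nonneg (show (0:ℝ) ≤ 1 - a by linarith),
            abs_of_nonneg (hY0 ω)]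
          nlinarith [hY0 ω, hYb ω]
        calc |a * Real.exp L * (X ω - Y ω) - (1 - a) * Y ω|
            ≤ |a * Real.exp L * (X ω - Y ω)| + |(1 - a) * Y ω| := abs_sub _ _
          _ ≤ 3 * n := by linarith
      calc |Φ ω| * |a * Real.exp L * (X ω - Y ω) - (1 - a) * Y ω|
          ≤ 1 * (3 * n) := by
            apply mul_le_mul hΦa hbr (abs_nonneg _) (by norm_num)
        _ = 3 * n := by ring
  -- the integral inequality
  have hmono : ∫ ω, (if Y ω ≤ t then (1:ℝ) else 0) ∂μ ≤
      ∫ ω, ((if X ω < Real.exp 1 / a * (t + s) then (1:ℝ) else 0)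
        + Real.exp (t - 1) / s * Real.exp (-a * X ω / Real.exp 1)
        + Real.exp (-L * t) / s *
            (Φ ω * (a * Real.exp L * (X ω - Y ω) - (1 - a) * Y ω))) ∂μ :=
    integral_mono_ae hf1 ((hf2.add hf3).add hf4) hae
  have hf23 : Integrable (fun ω => (if X ω < Real.exp 1 / a * (t + s) then (1:ℝ) else 0)
      + Real.exp (t - 1) / s * Real.exp (-a * X ω / Real.exp 1)) μ := hf2.add hf3
  rw [integral_add hf23 hf4, integral_add hf2 hf3] at hmono
  have hI1 : ∫ ω, (if Y ω ≤ t then (1:ℝ) else 0) ∂μ = (μ {ω | Y ω ≤ t}).toReal := by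
    have heq : (fun ω => if Y ω ≤ t then (1:ℝ) else 0)
        = Set.indicator {ω | Y ω ≤ t} (fun _ => (1:ℝ)) := by
      funext ω; rw [Set.indicator_apply]; rfl
    rw [heq, integral_indicator_const (1:ℝ) hmsetYt]; simp; rfl
  have hI2 : ∫ ω, (if X ω < Real.exp 1 / a * (t + s) then (1:ℝ) else 0) ∂μ
      = (μ {ω | X ω < Real.exp 1 / a * (t + s)}).toReal := by
    have heq : (fun ω => if X ω < Real.exp 1 / a * (t + s) then (1:ℝ) else 0)
        = Set.indicator {ω | X ω < Real.exp 1 / a * (t + s)} (fun _ => (1:ℝ)) := by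
      funext ω; rw [Set.indicator_apply]; rfl
    rw [heq, integral_indicator_const (1:ℝ) hmsetXM]; simp; rfl
  have hI3 : ∫ ω, Real.exp (t - 1) / s * Real.exp (-a * X ω / Real.exp 1) ∂μ
      = Real.exp (t - 1) / s * ∫ ω, Real.exp (-a * X ω / Real.exp 1) ∂μ :=
    integral_const_mul _ _
  have hI4 : ∫ ω, Real.exp (-L * t) / s *
      (Φ ω * (a * Real.exp L * (X ω - Y ω) - (1 - a) * Y ω)) ∂μ ≤ 0 := by
    have heq : (fun ω => Real.exp (-L * t) / s *
        (Φ ω * (a * Real.exp L * (X ω - Y ω) - (1 - a) * Y ω)))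
        = fun ω => Real.exp (-L * t) / s *
            -(Φ ω * ((1 - a) * Y ω - a * Real.exp L * (X ω - Y ω))) := by
      funext ω; ring
    rw [heq, integral_const_mul, integral_neg]
    have h0 : 0 ≤ Real.exp (-L * t) / s := div_nonneg (Real.exp_nonneg _) hs.le
    nlinarith [step3]
  rw [hI1, hI2, hI3] at hmono
  linarith [hmono, hI4]
end
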